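/- arXiv:1310.2984 — 5 statements merged into one kernel-verified Lean document; each statement's English description precedes it below -/
import Mathlib

section
/- Let G be a graph in which every node has degree at most z, and let S be a specific set of t nodes. Then the number of node sets of size s that contain S and are a union of connected clusters, each cluster containing at least one node of S, is at most e^{t-1} · (z·e)^{s-t}, where e is the base of the natural logarithm. -/
set_option linter.unusedSectionVars false
set_option linter.unusedVariables false
open Finset List

section Cluster
variable {V : Type*} [Fintype V] [DecidableEq V] [LinearOrder V] [Inhabited V]
  (G : SimpleGraph V) [DecidableRel G.Adj]

/-- sorted neighbor list -/
def agpNbrL (w : V) : List V := (G.neighborFinset w).sort (· ≤ ·)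

/-- k-th neighbor -/
def agpNbr (w : V) (k : ℕ) : V := (agpNbrL G w).getD k default

/-- candidate vertices: in T, not yet placed, adjacent to a placed vertex -/
def agpCands (T : Finset V) (L : List V) : Finset V :=
  T.filter (fun v => v ∉ L ∧ ∃ u ∈ L, G.Adj u v)

noncomputable def agpGrow (T : Finset V) (L : List V) : List V :=
  if h : (agpCands G T L).Nonempty then L ++ [(agpCands G T L).min' h] else L

noncomputable def agpGlist (T S : Finset V) (i : ℕ) : List V :=
  (agpGrow G T)^[i] (S.sort (· ≤ ·))

lemma agpGlist_zero (T S : Finset V) : agpGlist G T S 0 = S.sort (· ≤ ·) := rfl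

lemma agpGlist_succ (T S : Finset V) (i : ℕ) :
    agpGlist G T S (i+1) = agpGrow G T (agpGlist G T S i) :=
  Function.iterate_succ_apply' _ _ _

lemma agpGrow_prefix (T : Finset V) (L : List V) : L <+: agpGrow G T L := by
  unfold agpGrow
  split
  · exact prefix_append _ _
  · exact prefix_rfl

lemma agpGlist_prefix (T S : Finset V) {i j : ℕ} (h : i ≤ j) :
    agpGlist G T S i <+: agpGlist G T S j := by
  induction j with
  | zero => simp_all
  | succ k ih =>
    rcases Nat.eq_or_lt_of_le h with h1 | h1
    · rw [h1]
    · exact (ih (by omega)).trans (by rw [agpGlist_succ]; exact agpGrow_prefix G T _)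

lemma agpPrefix_getD {l1 l2 : List V} (h : l1 <+: l2) {n : ℕ} (hn : n < l1.length) (d : V) :
    l2.getD n d = l1.getD n d := by
  obtain ⟨r, rfl⟩ := h
  rw [getD_eq_getElem _ _ hn, getD_eq_getElem _ _ (by simp; omega)]
  exact getElem_append_left hn

/-- walk crossing lemma -/
lemma agpCross {T P : Finset V} : ∀ {x y : V} (w : G.Walk x y),
    (∀ v ∈ w.support, v ∈ T) → x ∉ P → y ∈ P →
    ∃ v ∈ T, v ∉ P ∧ ∃ u ∈ P, G.Adj u v := by
  intro x y w
  induction w with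
  | nil => intro _ hx hy; exact absurd hy hx
  | @cons a b c h p ih =>
    intro hs hx hy
    by_cases hb : b ∈ P
    · exact ⟨a, hs a (SimpleGraph.Walk.start_mem_support _), hx, b, hb, h.symm⟩
    · exact ih (fun v hv => hs v (by rw [SimpleGraph.Walk.support_cons]; exact List.mem_cons_of_mem _ hv)) hb hy

lemma agpCands_nonempty {T S : Finset V} (hST : S ⊆ T)
    (hconn : ∀ x ∈ T, ∃ y ∈ S, ∃ w : G.Walk x y, ∀ v ∈ w.support, v ∈ T)
    {L : List V} (hSL : ∀ a ∈ S, a ∈ L) (hLT : ∀ a ∈ L, a ∈ T)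
    (hnd : L.Nodup) (hlen : L.length < T.card) :
    (agpCands G T L).Nonempty := by
  have hsub : L.toFinset ⊆ T := fun a ha => hLT a (List.mem_toFinset.mp ha)
  have hcard : L.toFinset.card = L.length := List.toFinset_card_of_nodup hnd
  have hne : L.toFinset ≠ T := by
    intro h; rw [h] at hcard; omega
  obtain ⟨x, hxT, hxL⟩ := Finset.exists_of_ssubset (lt_of_le_of_ne hsub hne)
  obtain ⟨y, hyS, w, hw⟩ := hconn x hxT
  have hy : y ∈ L.toFinset := List.mem_toFinset.mpr (hSL y hyS)
  obtain ⟨v, hvT, hvP, u, huP, hadj⟩ := agpCross G w hw hxL hy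
  exact ⟨v, Finset.mem_filter.mpr ⟨hvT,
    fun h => hvP (List.mem_toFinset.mpr h), u, List.mem_toFinset.mp huP, hadj⟩⟩

lemma agpGlist_spec {T S : Finset V} (hST : S ⊆ T)
    (hconn : ∀ x ∈ T, ∃ y ∈ S, ∃ w : G.Walk x y, ∀ v ∈ w.support, v ∈ T) :
    ∀ i, S.card + i ≤ T.card →
    (agpGlist G T S i).Nodup ∧ (∀ a ∈ agpGlist G T S i, a ∈ T) ∧
      (∀ a ∈ S, a ∈ agpGlist G T S i) ∧ (agpGlist G T S i).length = S.card + i := by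
  intro i
  induction i with
  | zero =>
    intro _
    refine ⟨Finset.sort_nodup _ _, ?_, ?_, by simp [agpGlist]⟩
    · intro a ha; exact hST (Finset.mem_sort (α := V) (· ≤ ·) |>.mp ha)
    · intro a ha; exact (Finset.mem_sort (α := V) (· ≤ ·)).mpr ha
  | succ i ih =>
    intro hi
    obtain ⟨hnd, hLT, hSL, hlen⟩ := ih (by omega)
    have hne := agpCands_nonempty G hST hconn hSL hLT hnd (by omega)
    set v := (agpCands G T (agpGlist G T S i)).min' hne with hv
    have hstep : agpGlist G T S (i+1) = agpGlist G T S i ++ [v] := by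
      rw [agpGlist_succ]; unfold agpGrow; rw [dif_pos hne]
    have hvmem := (agpCands G T (agpGlist G T S i)).min'_mem hne
    simp only [agpCands, Finset.mem_filter] at hvmem
    obtain ⟨hvT, hvL, _⟩ := hvmem
    rw [hstep]
    refine ⟨?_, ?_, ?_, by simp [hlen]; try omega⟩
    · rw [List.nodup_append]
      refine ⟨hnd, List.nodup_singleton _, fun a ha b hb => ?_⟩
      rw [List.mem_singleton.mp hb]; intro hav; rw [hav] at ha
      exact hvL ha
    · intro a ha
      rcases List.mem_append.mp ha with h | h
      · exact hLT a h
      · rw [List.mem_singleton.mp h]; exact hvT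
    · intro a ha; exact List.mem_append.mpr (Or.inl (hSL a ha))

/-- the vertex added at step i -/
noncomputable def agpNext (T S : Finset V) (i : ℕ) : V :=
  (agpGlist G T S (i+1)).getD (S.card + i) default

lemma agpNext_spec {T S : Finset V} (hST : S ⊆ T)
    (hconn : ∀ x ∈ T, ∃ y ∈ S, ∃ w : G.Walk x y, ∀ v ∈ w.support, v ∈ T)
    {i : ℕ} (hi : S.card + i < T.card) :
    agpGlist G T S (i+1) = agpGlist G T S i ++ [agpNext G T S i] ∧
      agpNext G T S i ∈ agpCands G T (agpGlist G T S i) ∧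
      ∀ v ∈ agpCands G T (agpGlist G T S i), agpNext G T S i ≤ v := by
  obtain ⟨hnd, hLT, hSL, hlen⟩ := agpGlist_spec G hST hconn i (by omega)
  have hne := agpCands_nonempty G hST hconn hSL hLT hnd (by omega)
  set v := (agpCands G T (agpGlist G T S i)).min' hne with hv
  have hstep : agpGlist G T S (i+1) = agpGlist G T S i ++ [v] := by
    rw [agpGlist_succ]; unfold agpGrow; rw [dif_pos hne]
  have hnext : agpNext G T S i = v := by
    rw [agpNext, hstep, ← hlen]
    simp [getD_eq_getElem?_getD]
  rw [hnext]
  exact ⟨hstep, (agpCands G T (agpGlist G T S i)).min'_mem hne,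
    fun w hw => Finset.min'_le _ _ hw⟩

/-- position of the parent in the current list -/
noncomputable def agpPos (T S : Finset V) (i : ℕ) : ℕ :=
  (agpGlist G T S i).findIdx (fun w => decide (G.Adj w (agpNext G T S i)))

noncomputable def agpPar (T S : Finset V) (i : ℕ) : V :=
  (agpGlist G T S i).getD (agpPos G T S i) default

noncomputable def agpK (T S : Finset V) (i : ℕ) : ℕ :=
  (agpNbrL G (agpPar G T S i)).idxOf (agpNext G T S i)

noncomputable def agpCode (T S : Finset V) (m : ℕ) : Finset (ℕ × ℕ) :=
  (Finset.range m).image (fun i => (agpPos G T S i, agpK G T S i))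

lemma agpPos_spec {T S : Finset V} (hST : S ⊆ T)
    (hconn : ∀ x ∈ T, ∃ y ∈ S, ∃ w : G.Walk x y, ∀ v ∈ w.support, v ∈ T)
    {i : ℕ} (hi : S.card + i < T.card) :
    agpPos G T S i < (agpGlist G T S i).length ∧
      G.Adj (agpPar G T S i) (agpNext G T S i) := by
  obtain ⟨-, hmem, -⟩ := agpNext_spec G hST hconn hi
  simp only [agpCands, Finset.mem_filter] at hmem
  obtain ⟨-, -, u, huL, hadj⟩ := hmem
  have hex : ∃ w ∈ agpGlist G T S i, (fun w => decide (G.Adj w (agpNext G T S i))) w := by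
    exact ⟨u, huL, by simpa using hadj⟩
  have hlt : agpPos G T S i < (agpGlist G T S i).length :=
    List.findIdx_lt_length_of_exists hex
  refine ⟨hlt, ?_⟩
  have := List.findIdx_getElem (w := hlt)
  rw [agpPar, getD_eq_getElem _ _ hlt]
  simp only [decide_eq_true_eq] at this; exact this

lemma agpNbr_agpK {T S : Finset V} (hST : S ⊆ T)
    (hconn : ∀ x ∈ T, ∃ y ∈ S, ∃ w : G.Walk x y, ∀ v ∈ w.support, v ∈ T)
    {i : ℕ} (hi : S.card + i < T.card) :
    agpNbr G (agpPar G T S i) (agpK G T S i) = agpNext G T S i := by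
  obtain ⟨-, hadj⟩ := agpPos_spec G hST hconn hi
  have hmem : agpNext G T S i ∈ agpNbrL G (agpPar G T S i) := by
    rw [agpNbrL, Finset.mem_sort]
    exact (SimpleGraph.mem_neighborFinset _ _ _).mpr hadj
  have hlt : agpK G T S i < (agpNbrL G (agpPar G T S i)).length :=
    List.idxOf_lt_length_iff.mpr hmem
  rw [agpNbr, getD_eq_getElem _ _ hlt]
  exact List.getElem_idxOf hlt

lemma agpK_lt {T S : Finset V} (z : ℕ) (hdeg : ∀ v, G.degree v ≤ z) (hST : S ⊆ T)
    (hconn : ∀ x ∈ T, ∃ y ∈ S, ∃ w : G.Walk x y, ∀ v ∈ w.support, v ∈ T)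
    {i : ℕ} (hi : S.card + i < T.card) :
    agpK G T S i < z := by
  obtain ⟨-, hadj⟩ := agpPos_spec G hST hconn hi
  have hmem : agpNext G T S i ∈ agpNbrL G (agpPar G T S i) := by
    rw [agpNbrL, Finset.mem_sort]
    exact (SimpleGraph.mem_neighborFinset _ _ _).mpr hadj
  have hlt : agpK G T S i < (agpNbrL G (agpPar G T S i)).length :=
    List.idxOf_lt_length_iff.mpr hmem
  have hlen : (agpNbrL G (agpPar G T S i)).length = G.degree (agpPar G T S i) := by
    rw [agpNbrL, Finset.length_sort, ← SimpleGraph.card_neighborFinset_eq_degree]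
  have := hdeg (agpPar G T S i)
  omega

lemma agpPos_lt_card {T S : Finset V} (hST : S ⊆ T)
    (hconn : ∀ x ∈ T, ∃ y ∈ S, ∃ w : G.Walk x y, ∀ v ∈ w.support, v ∈ T)
    {i : ℕ} (hi : S.card + i < T.card) :
    agpPos G T S i < T.card := by
  obtain ⟨h1, -⟩ := agpPos_spec G hST hconn hi
  obtain ⟨-, -, -, hlen⟩ := agpGlist_spec G hST hconn i (le_of_lt hi)
  omega

noncomputable def agpDcands (C : Finset (ℕ × ℕ)) (L : List V) : Finset V :=
  ((C.filter (fun pk => pk.1 < L.length)).image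
      (fun pk => agpNbr G (L.getD pk.1 default) pk.2)) \ L.toFinset

noncomputable def agpDstep (C : Finset (ℕ × ℕ)) (L : List V) : List V :=
  if h : (agpDcands G C L).Nonempty then L ++ [(agpDcands G C L).min' h] else L

lemma agpNext_mem_succ {T S : Finset V} (hST : S ⊆ T)
    (hconn : ∀ x ∈ T, ∃ y ∈ S, ∃ w : G.Walk x y, ∀ v ∈ w.support, v ∈ T)
    {i : ℕ} (hi : S.card + i < T.card) :
    agpNext G T S i ∈ agpGlist G T S (i+1) := by
  obtain ⟨hstep, -, -⟩ := agpNext_spec G hST hconn hi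
  rw [hstep]; simp

lemma agpDecode_glist {T S : Finset V} (hST : S ⊆ T)
    (hconn : ∀ x ∈ T, ∃ y ∈ S, ∃ w : G.Walk x y, ∀ v ∈ w.support, v ∈ T)
    {m : ℕ} (hm : T.card = S.card + m) :
    ∀ i, i ≤ m → (agpDstep G (agpCode G T S m))^[i] (S.sort (· ≤ ·)) = agpGlist G T S i := by
  intro i
  induction i with
  | zero => intro _; rfl
  | succ i ih =>
    intro hi
    rw [Function.iterate_succ_apply', ih (by omega)]
    unfold agpDstep
    set L := agpGlist G T S i with hL
    have hi' : S.card + i < T.card := by omega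
    obtain ⟨hstep, hmem, hmin⟩ := agpNext_spec G hST hconn hi'
    obtain ⟨hndL, hLT, hSL, hlen⟩ := agpGlist_spec G hST hconn i (le_of_lt hi')
    set u := agpNext G T S i with hu
    set cd := agpDcands G (agpCode G T S m) L with hcd
    have hcd' : cd = ((agpCode G T S m).filter (fun pk => pk.1 < L.length)).image
        (fun pk => agpNbr G (L.getD pk.1 default) pk.2) \ L.toFinset := rfl
    have hposi := agpPos_spec G hST hconn hi'
    have hpair : (agpPos G T S i, agpK G T S i) ∈ agpCode G T S m :=
      Finset.mem_image.mpr ⟨i, Finset.mem_range.mpr (by omega), rfl⟩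
    simp only [agpCands, Finset.mem_filter] at hmem
    obtain ⟨huT, huL, hupar⟩ := hmem
    have hu_cd : u ∈ cd := by
      rw [hcd', Finset.mem_sdiff]
      constructor
      · apply Finset.mem_image.mpr
        refine ⟨(agpPos G T S i, agpK G T S i), Finset.mem_filter.mpr ⟨hpair, hposi.1⟩, ?_⟩
        show agpNbr G (L.getD (agpPos G T S i) default) (agpK G T S i) = u
        have hre : L.getD (agpPos G T S i) default = agpPar G T S i := rfl
        rw [hre, hu]
        exact agpNbr_agpK G hST hconn hi'
      · simpa using huL
    have hsub : ∀ x ∈ cd, x ∈ agpCands G T L := by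
      intro x hx
      rw [hcd', Finset.mem_sdiff] at hx
      obtain ⟨hx1, hx2⟩ := hx
      obtain ⟨pk, hpk, hxval⟩ := Finset.mem_image.mp hx1
      rw [Finset.mem_filter] at hpk
      obtain ⟨hpkC, hplt⟩ := hpk
      obtain ⟨j, hj, hjpair⟩ := Finset.mem_image.mp hpkC
      rw [Finset.mem_range] at hj
      have hj' : S.card + j < T.card := by omega
      subst hjpair
      simp only at hplt hxval
      have hposj := agpPos_spec G hST hconn hj'
      have hparent_eq : L.getD (agpPos G T S j) default = agpPar G T S j := by
        rcases le_total i j with h | h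
        · rw [agpPar]
          exact (agpPrefix_getD (agpGlist_prefix G T S h) hplt default).symm
        · rw [agpPar, hL]
          exact agpPrefix_getD (agpGlist_prefix G T S h) hposj.1 default
      have hxu : x = agpNext G T S j := by
        rw [← hxval, hparent_eq]
        exact agpNbr_agpK G hST hconn hj'
      obtain ⟨-, hjT, -, -⟩ := agpGlist_spec G hST hconn (j+1) (by omega)
      simp only [agpCands, Finset.mem_filter]
      refine ⟨?_, by simpa using hx2, agpPar G T S j, ?_, ?_⟩
      · rw [hxu]
        exact hjT _ (agpNext_mem_succ G hST hconn hj')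
      · rw [← hparent_eq, getD_eq_getElem _ _ hplt]
        exact List.getElem_mem _
      · rw [hxu]; exact hposj.2
    have hne : cd.Nonempty := ⟨u, hu_cd⟩
    rw [dif_pos hne]
    have humin : cd.min' hne = u := le_antisymm (Finset.min'_le _ _ hu_cd)
      (Finset.le_min' _ _ _ (fun y hy => hmin y (hsub y hy)))
    rw [humin, ← hstep]

lemma agpCode_card {T S : Finset V} (hST : S ⊆ T)
    (hconn : ∀ x ∈ T, ∃ y ∈ S, ∃ w : G.Walk x y, ∀ v ∈ w.support, v ∈ T)
    {m : ℕ} (hm : T.card = S.card + m) :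
    (agpCode G T S m).card = m := by
  have key : ∀ i j, i < j → j < m →
      (agpPos G T S i, agpK G T S i) ≠ (agpPos G T S j, agpK G T S j) := by
    intro i j hlt hj heq
    have hi' : S.card + i < T.card := by omega
    have hj' : S.card + j < T.card := by omega
    have h1 : agpPos G T S i = agpPos G T S j := congrArg Prod.fst heq
    have h2 : agpK G T S i = agpK G T S j := congrArg Prod.snd heq
    have hposi := agpPos_spec G hST hconn hi'
    have hpar : agpPar G T S j = agpPar G T S i := by
      rw [agpPar, agpPar, ← h1]
      exact agpPrefix_getD (agpGlist_prefix G T S (le_of_lt hlt)) hposi.1 default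
    have hnexteq : agpNext G T S j = agpNext G T S i := by
      rw [← agpNbr_agpK G hST hconn hj', ← agpNbr_agpK G hST hconn hi', hpar, h2]
    obtain ⟨-, hmemj, -⟩ := agpNext_spec G hST hconn hj'
    simp only [agpCands, Finset.mem_filter] at hmemj
    obtain ⟨-, hnotin, -⟩ := hmemj
    apply hnotin
    rw [hnexteq]
    exact (agpGlist_prefix G T S (by omega : i + 1 ≤ j)).subset
      (agpNext_mem_succ G hST hconn hi')
  rw [agpCode, Finset.card_image_of_injOn, Finset.card_range]
  intro i hi j hj hij
  simp only [Finset.coe_range, Set.mem_Iio] at hi hj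
  rcases lt_trichotomy i j with h | h | h
  · exact absurd hij (key i j h hj)
  · exact h
  · exact absurd hij.symm (key j i h hi)

lemma agpCode_subset {T S : Finset V} (z : ℕ) (hdeg : ∀ v, G.degree v ≤ z) (hST : S ⊆ T)
    (hconn : ∀ x ∈ T, ∃ y ∈ S, ∃ w : G.Walk x y, ∀ v ∈ w.support, v ∈ T)
    {m : ℕ} (hm : T.card = S.card + m) :
    agpCode G T S m ⊆ Finset.range T.card ×ˢ Finset.range z := by
  intro pk hpk
  obtain ⟨i, hi, rfl⟩ := Finset.mem_image.mp hpk
  rw [Finset.mem_range] at hi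
  have hi' : S.card + i < T.card := by omega
  rw [Finset.mem_product, Finset.mem_range, Finset.mem_range]
  exact ⟨agpPos_lt_card G hST hconn hi', agpK_lt G z hdeg hST hconn hi'⟩

lemma agpDecode_eq {T S : Finset V} (hST : S ⊆ T)
    (hconn : ∀ x ∈ T, ∃ y ∈ S, ∃ w : G.Walk x y, ∀ v ∈ w.support, v ∈ T)
    {m : ℕ} (hm : T.card = S.card + m) :
    ((agpDstep G (agpCode G T S m))^[m] (S.sort (· ≤ ·))).toFinset = T := by
  rw [agpDecode_glist G hST hconn hm m le_rfl]
  obtain ⟨hnd, hLT, hSL, hlen⟩ := agpGlist_spec G hST hconn m (by omega)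
  apply Finset.eq_of_subset_of_card_le
  · intro a ha; exact hLT a (List.mem_toFinset.mp ha)
  · rw [List.toFinset_card_of_nodup hnd, hlen, hm]

end Cluster

open Finset

lemma aux_one_add_div_pow (k : ℕ) (hk : 1 ≤ k) : ∀ c : ℝ, 0 ≤ c →
    ((k:ℝ) + c)^k ≤ Real.exp c * (k:ℝ)^k := by
  intro c hc
  have hk0 : (0:ℝ) < k := by exact_mod_cast hk
  have h1 : (k:ℝ) + c = (1 + c/k) * k := by field_simp
  rw [h1, mul_pow]
  have h2 : (1 + c/k : ℝ) ≤ Real.exp (c/k) := by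
    have := Real.add_one_le_exp (c/k); linarith
  have h3 : (1 + c/k : ℝ)^k ≤ (Real.exp (c/k))^k := by
    apply pow_le_pow_left₀ (by positivity) h2
  have h4 : (Real.exp (c/k))^k = Real.exp c := by
    rw [← Real.exp_nat_mul]; congr 1; field_simp
  rw [← h4]
  exact mul_le_mul_of_nonneg_right h3 (by positivity)

lemma aux_pow_self_le (n : ℕ) (h : 1 ≤ n) :
    (n:ℝ)^n ≤ Real.exp 1 ^ (n-1) * n.factorial := by
  induction n with
  | zero => omega
  | succ k ih =>
    rcases Nat.eq_zero_or_pos k with hk | hk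
    · subst hk; norm_num
    · have ihk := ih hk
      have e1 : (1:ℝ) ≤ Real.exp 1 := by
        have := Real.add_one_le_exp (1:ℝ); linarith
      have step : ((k:ℝ)+1)^k ≤ Real.exp 1 * (k:ℝ)^k := aux_one_add_div_pow k hk 1 zero_le_one
      have h5 : ((k+1:ℕ):ℝ)^(k+1) = ((k:ℝ)+1) * ((k:ℝ)+1)^k := by push_cast; ring
      rw [h5]
      have hfac : ((k+1).factorial : ℝ) = ((k:ℝ)+1) * k.factorial := by
        rw [Nat.factorial_succ]; push_cast; ring
      have hexp : Real.exp 1 ^ (k+1-1) = Real.exp 1 * Real.exp 1 ^ (k-1) := by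
        have h6 : k + 1 - 1 = (k-1) + 1 := by omega
        rw [h6, pow_succ]; ring
      rw [hfac, hexp]
      have hfp : (0:ℝ) ≤ k.factorial := by positivity
      have hkk : (0:ℝ) ≤ (k:ℝ)^k := by positivity
      nlinarith [mul_le_mul_of_nonneg_left ihk (Real.exp_pos 1).le,
        mul_le_mul_of_nonneg_left step (by positivity : (0:ℝ) ≤ (k:ℝ)+1),
        mul_le_mul_of_nonneg_left (mul_le_mul_of_nonneg_left ihk (Real.exp_pos 1).le)
          (by positivity : (0:ℝ) ≤ (k:ℝ)+1)]

lemma aux_choose_bound (z s t : ℕ) (hz : 1 ≤ z) (ht : 1 ≤ t) (hts : t ≤ s) :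
    (((z*s).choose (s-t)) : ℝ) ≤ Real.exp 1 ^ (t-1) * ((z:ℝ) * Real.exp 1) ^ (s-t) := by
  set m := s - t with hm
  have e1 : (1:ℝ) ≤ Real.exp 1 := by have := Real.add_one_le_exp (1:ℝ); linarith
  rcases Nat.eq_zero_or_pos m with h0 | hm1
  · rw [h0]
    simp only [Nat.choose_zero_right, pow_zero, mul_one, Nat.cast_one]
    calc (1:ℝ) = 1^(t-1) := (one_pow _).symm
      _ ≤ Real.exp 1 ^ (t-1) := pow_le_pow_left₀ zero_le_one e1 _
  · have hs : s = m + t := by omega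
    have h1 : ((z*s).choose m) * m.factorial ≤ (z*s)^m := by
      calc ((z*s).choose m) * m.factorial = m.factorial * ((z*s).choose m) := by ring
        _ = (z*s).descFactorial m := (Nat.descFactorial_eq_factorial_mul_choose _ _).symm
        _ ≤ (z*s)^m := Nat.descFactorial_le_pow _ _
    have h1R : (((z*s).choose m) : ℝ) * m.factorial ≤ ((z:ℝ)*s)^m := by
      exact_mod_cast h1
    have h2 := aux_pow_self_le m hm1
    have h3 : ((s:ℝ))^m ≤ Real.exp t * (m:ℝ)^m := by
      have h3' := aux_one_add_div_pow m hm1 t (by positivity)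
      rw [hs]; push_cast; push_cast at h3'; linarith
    have hfac : (0:ℝ) < m.factorial := by exact_mod_cast m.factorial_pos
    have key : (((z*s).choose m) : ℝ) * ((m:ℝ)^m) ≤ ((z:ℝ)*s)^m * (Real.exp 1 ^ (m-1)) := by
      calc (((z*s).choose m) : ℝ) * ((m:ℝ)^m)
          ≤ (((z*s).choose m) : ℝ) * (Real.exp 1 ^ (m-1) * m.factorial) := by
            gcongr
        _ = ((((z*s).choose m) : ℝ) * m.factorial) * Real.exp 1 ^ (m-1) := by ring
        _ ≤ ((z:ℝ)*s)^m * (Real.exp 1 ^ (m-1)) := by gcongr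
    have et : Real.exp (t:ℝ) = Real.exp 1 ^ t := by
      rw [← Real.exp_nat_mul]; norm_num
    have h4 : ((z:ℝ)*s)^m * Real.exp 1 ^ (m-1)
        ≤ (Real.exp 1 ^ (t-1) * ((z:ℝ)*Real.exp 1)^m) * (m:ℝ)^m := by
      have expand : ((z:ℝ)*s)^m = (z:ℝ)^m * (s:ℝ)^m := mul_pow _ _ _
      have hz0 : (0:ℝ) ≤ (z:ℝ)^m := by positivity
      have estep : Real.exp 1 ^ t * Real.exp 1 ^ (m-1) = Real.exp 1 ^ (t-1) * Real.exp 1 ^ m := by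
        rw [← pow_add, ← pow_add]; congr 1; omega
      calc ((z:ℝ)*s)^m * Real.exp 1 ^ (m-1) = ((z:ℝ)^m * (s:ℝ)^m) * Real.exp 1 ^ (m-1) := by
            rw [expand]
        _ ≤ ((z:ℝ)^m * (Real.exp t * (m:ℝ)^m)) * Real.exp 1 ^ (m-1) := by
            gcongr
        _ = (Real.exp 1 ^ t * Real.exp 1 ^ (m-1)) * ((z:ℝ)^m * (m:ℝ)^m) := by
            rw [et]; ring
        _ = (Real.exp 1 ^ (t-1) * Real.exp 1 ^ m) * ((z:ℝ)^m * (m:ℝ)^m) := by rw [estep]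
        _ = (Real.exp 1 ^ (t-1) * ((z:ℝ)*Real.exp 1)^m) * (m:ℝ)^m := by
            rw [mul_pow]; ring
    have hmm : (0:ℝ) < (m:ℝ)^m := by
      have : (0:ℝ) < (m:ℝ) := by exact_mod_cast hm1
      positivity
    exact (mul_le_mul_iff_of_pos_right hmm).mp (key.trans h4)


/-- Lemma 5 of AGP08 (cluster counting): in a graph of maximum degree `z`, the
number of vertex sets of size `s` containing a fixed set `S` of `t` vertices,
such that every vertex is connected within the set to some vertex of `S`,
is at most `e^(t-1) * (z e)^(s-t)`. -/
theorem cluster_union_count {V : Type*} [Fintype V] [DecidableEq V]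
    (G : SimpleGraph V) [DecidableRel G.Adj] (z : ℕ) (hz : 1 ≤ z)
    (hdeg : ∀ v, G.degree v ≤ z)
    (S : Finset V) (t s : ℕ) (hS : S.card = t) (ht : 1 ≤ t) (hts : t ≤ s) :
    ({T : Finset V | S ⊆ T ∧ T.card = s ∧
        ∀ x ∈ T, ∃ y ∈ S, ∃ w : G.Walk x y, ∀ v ∈ w.support, v ∈ T}.ncard : ℝ)
      ≤ Real.exp 1 ^ (t - 1) * ((z : ℝ) * Real.exp 1) ^ (s - t) := by
  classical
  have hSne : S.Nonempty := Finset.card_pos.mp (by omega)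
  obtain ⟨v0, -⟩ := hSne
  letI : Inhabited V := ⟨v0⟩
  letI : LinearOrder V := LinearOrder.lift' (fun v => (Fintype.equivFin V) v)
    (fun a b hab => (Fintype.equivFin V).injective hab)
  set m := s - t with hmdef
  set F : Finset (Finset V) := Finset.univ.filter (fun T => S ⊆ T ∧ T.card = s ∧
    ∀ x ∈ T, ∃ y ∈ S, ∃ w : G.Walk x y, ∀ v ∈ w.support, v ∈ T) with hF
  have h1 : {T : Finset V | S ⊆ T ∧ T.card = s ∧
      ∀ x ∈ T, ∃ y ∈ S, ∃ w : G.Walk x y, ∀ v ∈ w.support, v ∈ T}.ncard = F.card := by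
    rw [← Set.ncard_coe_finset]
    congr 1
    ext T
    simp [hF]
  have h2 : F.card ≤ ((Finset.range s ×ˢ Finset.range z).powersetCard m).card := by
    apply Finset.card_le_card_of_injOn (fun T => agpCode G T S m)
    · intro T hT
      simp only [hF, Finset.mem_coe, Finset.mem_filter, Finset.mem_univ, true_and] at hT
      obtain ⟨hST, hcard, hconn⟩ := hT
      have hm' : T.card = S.card + m := by rw [hcard, hS]; omega
      rw [Finset.mem_coe, Finset.mem_powersetCard]
      constructor
      · have := agpCode_subset G z hdeg hST hconn hm'
        rwa [hcard] at this
      · exact agpCode_card G hST hconn hm'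
    · intro T1 hT1 T2 hT2 heq
      simp only [hF, Finset.coe_filter, Finset.mem_univ, true_and, Set.mem_setOf_eq] at hT1 hT2
      obtain ⟨hST1, hcard1, hconn1⟩ := hT1
      obtain ⟨hST2, hcard2, hconn2⟩ := hT2
      have hm1 : T1.card = S.card + m := by rw [hcard1, hS]; omega
      have hm2 : T2.card = S.card + m := by rw [hcard2, hS]; omega
      have e1 := agpDecode_eq G hST1 hconn1 hm1
      have e2 := agpDecode_eq G hST2 hconn2 hm2
      simp only at heq
      rw [heq] at e1
      exact e1.symm.trans e2
  have h3 : ((Finset.range s ×ˢ Finset.range z).powersetCard m).card = (z*s).choose m := by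
    rw [Finset.card_powersetCard, Finset.card_product, Finset.card_range, Finset.card_range,
      mul_comm]
  rw [h1]
  calc (F.card : ℝ) ≤ (((z*s).choose m : ℕ) : ℝ) := by
        rw [← h3]; exact_mod_cast h2
    _ ≤ Real.exp 1 ^ (t - 1) * ((z : ℝ) * Real.exp 1) ^ (s - t) :=
        aux_choose_bound z s t hz ht hts
end

section
/- In a graph with maximum degree z, the number of connected node sets of size s containing a fixed node v is at most (z·e)^{s-1}. -/
set_option maxHeartbeats 1000000

namespace ClusterCount

open Finset SimpleGraph

variable {V : Type*} [Fintype V] [DecidableEq V] [LinearOrder V]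
  (G : SimpleGraph V) [DecidableRel G.Adj] (v : V) (T : Finset V)

/-- Frontier: vertices of `T` outside `A` adjacent to `A`. -/
def nextB (A : Finset V) : Finset V :=
  (T \ A).filter (fun w => ∃ a ∈ A, G.Adj a w)

/-- The next explored vertex: smallest frontier vertex (junk value `v`). -/
def nextV (A : Finset V) : V :=
  if h : (nextB G T A).Nonempty then (nextB G T A).min' h else v

/-- The exploration chain. -/
def chain : ℕ → Finset V
  | 0 => {v}
  | i + 1 => insert (nextV G v T (chain i)) (chain i)

/-- The exploration sequence. -/
def useq : ℕ → V
  | 0 => v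
  | i + 1 => nextV G v T (chain G v T i)

lemma mem_nextB {A : Finset V} {w : V} :
    w ∈ nextB G T A ↔ (w ∈ T ∧ w ∉ A) ∧ ∃ a ∈ A, G.Adj a w := by
  simp [nextB, Finset.mem_filter, Finset.mem_sdiff]

lemma nextB_nonempty
    (hconn : ∀ x ∈ T, ∃ w : G.Walk x v, ∀ u ∈ w.support, u ∈ T)
    {A : Finset V} (hvA : v ∈ A) (h : (T \ A).Nonempty) :
    (nextB G T A).Nonempty := by
  obtain ⟨x, hx⟩ := h
  rw [Finset.mem_sdiff] at hx
  obtain ⟨p, hp⟩ := hconn x hx.1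
  obtain ⟨d, hd, hd1, hd2⟩ :=
    p.reverse.exists_boundary_dart (↑A) (by exact_mod_cast hvA) (by exact_mod_cast hx.2)
  refine ⟨d.snd, (mem_nextB G T).2 ⟨⟨?_, by exact_mod_cast hd2⟩, d.fst, by exact_mod_cast hd1, d.adj⟩⟩
  have := SimpleGraph.Walk.dart_snd_mem_support_of_mem_darts _ hd
  rw [SimpleGraph.Walk.support_reverse, List.mem_reverse] at this
  exact hp _ this

lemma chain_succ (i : ℕ) :
    chain G v T (i + 1) = insert (useq G v T (i + 1)) (chain G v T i) := rfl

lemma v_mem_chain (i : ℕ) : v ∈ chain G v T i := by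
  induction i with
  | zero => simp [chain]
  | succ i ih => exact Finset.mem_insert_of_mem ih

lemma chain_mono : Monotone (chain G v T) :=
  monotone_nat_of_le_succ fun i => Finset.subset_insert _ _

lemma chain_subset_T (hvT : v ∈ T) (i : ℕ) : chain G v T i ⊆ T := by
  induction i with
  | zero => simpa [chain] using hvT
  | succ i ih =>
    rw [chain_succ]
    refine Finset.insert_subset ?_ ih
    show nextV G v T (chain G v T i) ∈ T
    rw [nextV]
    split_ifs with h
    · exact (Finset.mem_sdiff.1 (Finset.filter_subset _ _ (Finset.min'_mem _ h))).1
    · exact hvT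

lemma chain_eq_image (i : ℕ) :
    chain G v T i = (Finset.range (i + 1)).image (useq G v T) := by
  induction i with
  | zero => simp [chain, useq]
  | succ i ih =>
    rw [chain_succ, ih,
      show Finset.range (i + 1 + 1) = insert (i + 1) (Finset.range (i + 1)) from
        Finset.range_add_one,
      Finset.image_insert]

lemma useq_succ_mem (hvT : v ∈ T)
    (hconn : ∀ x ∈ T, ∃ w : G.Walk x v, ∀ u ∈ w.support, u ∈ T)
    {j : ℕ} (hj : (chain G v T j).card < T.card) :
    useq G v T (j + 1) ∈ nextB G T (chain G v T j) := by
  have hne : (T \ chain G v T j).Nonempty := by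
    rw [Finset.sdiff_nonempty]
    intro hsub
    exact absurd (Finset.card_le_card hsub) (not_le.2 hj)
  have hB := nextB_nonempty G v T hconn (v_mem_chain G v T j) hne
  show nextV G v T (chain G v T j) ∈ _
  rw [nextV, dif_pos hB]
  exact Finset.min'_mem _ hB

lemma chain_card (hvT : v ∈ T)
    (hconn : ∀ x ∈ T, ∃ w : G.Walk x v, ∀ u ∈ w.support, u ∈ T) :
    ∀ i, i < T.card → (chain G v T i).card = i + 1 := by
  intro i
  induction i with
  | zero => intro _; simp [chain]
  | succ i ih =>
    intro h
    have hih := ih (Nat.lt_of_succ_lt h)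
    have hmem := useq_succ_mem G v T hvT hconn (by rw [hih]; exact h)
    have hnotmem : useq G v T (i + 1) ∉ chain G v T i :=
      ((mem_nextB G T).1 hmem).1.2
    rw [chain_succ, Finset.card_insert_of_notMem hnotmem, hih]

lemma chain_eq_T (hvT : v ∈ T)
    (hconn : ∀ x ∈ T, ∃ w : G.Walk x v, ∀ u ∈ w.support, u ∈ T) :
    chain G v T (T.card - 1) = T := by
  have hpos : 0 < T.card := Finset.card_pos.2 ⟨v, hvT⟩
  refine Finset.eq_of_subset_of_card_le (chain_subset_T G v T hvT _) ?_
  rw [chain_card G v T hvT hconn _ (Nat.sub_lt hpos one_pos)]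
  omega

lemma useq_mem_chain {i j : ℕ} (h : i ≤ j) : useq G v T i ∈ chain G v T j := by
  apply chain_mono G v T h
  rw [chain_eq_image]
  exact Finset.mem_image_of_mem _ (Finset.mem_range.2 (Nat.lt_succ_self i))

lemma useq_notMem_chain (hvT : v ∈ T)
    (hconn : ∀ x ∈ T, ∃ w : G.Walk x v, ∀ u ∈ w.support, u ∈ T)
    {j : ℕ} (hj : j + 1 < T.card) :
    useq G v T (j + 1) ∉ chain G v T j := by
  have hmem := useq_succ_mem G v T hvT hconn
    (by rw [chain_card G v T hvT hconn j (Nat.lt_of_succ_lt hj)]; exact hj)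
  exact ((mem_nextB G T).1 hmem).1.2

lemma useq_injOn (hvT : v ∈ T)
    (hconn : ∀ x ∈ T, ∃ w : G.Walk x v, ∀ u ∈ w.support, u ∈ T)
    {i j : ℕ} (hij : i < j) (hj : j < T.card) :
    useq G v T i ≠ useq G v T j := by
  obtain ⟨k, rfl⟩ : ∃ k, j = k + 1 := ⟨j - 1, by omega⟩
  intro h
  apply useq_notMem_chain G v T hvT hconn hj
  rw [← h]
  exact useq_mem_chain G v T (by omega)

/-- The candidate parents of `useq i`. -/
def parset (i : ℕ) : Finset ℕ :=
  (Finset.range i).filter (fun j => G.Adj (useq G v T j) (useq G v T i))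

/-- The parent index of `useq i`. -/
def par (i : ℕ) : ℕ :=
  if h : (parset G v T i).Nonempty then (parset G v T i).min' h else 0

lemma parset_nonempty (hvT : v ∈ T)
    (hconn : ∀ x ∈ T, ∃ w : G.Walk x v, ∀ u ∈ w.support, u ∈ T)
    {j : ℕ} (hj : j + 1 < T.card) : (parset G v T (j + 1)).Nonempty := by
  have hmem := useq_succ_mem G v T hvT hconn
    (by rw [chain_card G v T hvT hconn j (Nat.lt_of_succ_lt hj)]; exact hj)
  obtain ⟨a, haA, hadj⟩ := ((mem_nextB G T).1 hmem).2
  rw [chain_eq_image] at haA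
  obtain ⟨k, hk, rfl⟩ := Finset.mem_image.1 haA
  exact ⟨k, Finset.mem_filter.2 ⟨hk, hadj⟩⟩

lemma par_mem (hvT : v ∈ T)
    (hconn : ∀ x ∈ T, ∃ w : G.Walk x v, ∀ u ∈ w.support, u ∈ T)
    {j : ℕ} (hj : j + 1 < T.card) :
    par G v T (j + 1) ∈ parset G v T (j + 1) := by
  rw [par, dif_pos (parset_nonempty G v T hvT hconn hj)]
  exact Finset.min'_mem _ _

lemma par_lt (hvT : v ∈ T)
    (hconn : ∀ x ∈ T, ∃ w : G.Walk x v, ∀ u ∈ w.support, u ∈ T)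
    {j : ℕ} (hj : j + 1 < T.card) : par G v T (j + 1) < j + 1 :=
  Finset.mem_range.1 (Finset.mem_filter.1 (par_mem G v T hvT hconn hj)).1

lemma par_adj (hvT : v ∈ T)
    (hconn : ∀ x ∈ T, ∃ w : G.Walk x v, ∀ u ∈ w.support, u ∈ T)
    {j : ℕ} (hj : j + 1 < T.card) :
    G.Adj (useq G v T (par G v T (j + 1))) (useq G v T (j + 1)) :=
  (Finset.mem_filter.1 (par_mem G v T hvT hconn hj)).2

lemma par_min (hvT : v ∈ T)
    (hconn : ∀ x ∈ T, ∃ w : G.Walk x v, ∀ u ∈ w.support, u ∈ T)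
    {j k : ℕ} (hj : j + 1 < T.card) (hk : k ∈ parset G v T (j + 1)) :
    par G v T (j + 1) ≤ k := by
  rw [par, dif_pos (parset_nonempty G v T hvT hconn hj)]
  exact Finset.min'_le _ _ hk

/-- The local index of `useq i` among the neighbours of its parent. -/
def idx (i : ℕ) : ℕ :=
  ((G.neighborFinset (useq G v T (par G v T i))).filter
    (fun w => w < useq G v T i)).card

/-- Two neighbours with the same number of smaller neighbours are equal. -/
lemma cnt_injOn (a : V) {w w' : V} (hw : w ∈ G.neighborFinset a)
    (hw' : w' ∈ G.neighborFinset a)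
    (h : ((G.neighborFinset a).filter (fun x => x < w)).card =
         ((G.neighborFinset a).filter (fun x => x < w')).card) : w = w' := by
  rcases lt_trichotomy w w' with hlt | he | hlt
  · exfalso
    have hss : (G.neighborFinset a).filter (fun x => x < w) ⊂
        (G.neighborFinset a).filter (fun x => x < w') := by
      refine ⟨fun x hx => Finset.mem_filter.2
        ⟨(Finset.mem_filter.1 hx).1, lt_trans (Finset.mem_filter.1 hx).2 hlt⟩,
        fun hsub => ?_⟩
      have : w ∈ (G.neighborFinset a).filter (fun x => x < w) :=
        hsub (Finset.mem_filter.2 ⟨hw, hlt⟩)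
      exact absurd (Finset.mem_filter.1 this).2 (lt_irrefl w)
    exact absurd h (Finset.card_lt_card hss).ne
  · exact he
  · exfalso
    have hss : (G.neighborFinset a).filter (fun x => x < w') ⊂
        (G.neighborFinset a).filter (fun x => x < w) := by
      refine ⟨fun x hx => Finset.mem_filter.2
        ⟨(Finset.mem_filter.1 hx).1, lt_trans (Finset.mem_filter.1 hx).2 hlt⟩,
        fun hsub => ?_⟩
      have : w' ∈ (G.neighborFinset a).filter (fun x => x < w') :=
        hsub (Finset.mem_filter.2 ⟨hw', hlt⟩)
      exact absurd (Finset.mem_filter.1 this).2 (lt_irrefl w')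
    exact absurd h.symm (Finset.card_lt_card hss).ne

/-- Candidate decodings. -/
def decSet (a : V) (c : ℕ) : Finset V :=
  (G.neighborFinset a).filter
    (fun w => ((G.neighborFinset a).filter (fun x => x < w)).card = c)

/-- Decode a local index back to a vertex (junk value `v`). -/
def dec (a : V) (c : ℕ) : V :=
  if h : (decSet G a c).Nonempty then (decSet G a c).min' h else v

lemma dec_spec {a w : V} (hw : w ∈ G.neighborFinset a) :
    dec G v a (((G.neighborFinset a).filter (fun x => x < w)).card) = w := by
  set c := ((G.neighborFinset a).filter (fun x => x < w)).card with hc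
  have hw' : w ∈ decSet G a c := Finset.mem_filter.2 ⟨hw, rfl⟩
  have hne : (decSet G a c).Nonempty := ⟨w, hw'⟩
  rw [dec, dif_pos hne]
  have hm := Finset.min'_mem (decSet G a c) hne
  simp only [decSet, Finset.mem_filter] at hm
  exact cnt_injOn G a hm.1 hw (hm.2.trans hc)

lemma dec_useq (hvT : v ∈ T)
    (hconn : ∀ x ∈ T, ∃ w : G.Walk x v, ∀ u ∈ w.support, u ∈ T)
    {j : ℕ} (hj : j + 1 < T.card) :
    dec G v (useq G v T (par G v T (j + 1))) (idx G v T (j + 1)) = useq G v T (j + 1) :=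
  dec_spec G v ((SimpleGraph.mem_neighborFinset _ _ _).2 (par_adj G v T hvT hconn hj))

lemma idx_lt {z : ℕ} (hdeg : ∀ u, G.degree u ≤ z) (hvT : v ∈ T)
    (hconn : ∀ x ∈ T, ∃ w : G.Walk x v, ∀ u ∈ w.support, u ∈ T)
    {j : ℕ} (hj : j + 1 < T.card) : idx G v T (j + 1) < z := by
  set a := useq G v T (par G v T (j + 1))
  have hmem : useq G v T (j + 1) ∈ G.neighborFinset a :=
    (SimpleGraph.mem_neighborFinset _ _ _).2 (par_adj G v T hvT hconn hj)
  have hss : (G.neighborFinset a).filter (fun x => x < useq G v T (j + 1)) ⊂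
      G.neighborFinset a := by
    refine ⟨Finset.filter_subset _ _, fun hsub => ?_⟩
    have := hsub hmem
    exact absurd (Finset.mem_filter.1 this).2 (lt_irrefl _)
  have h1 : idx G v T (j + 1) < (G.neighborFinset a).card := Finset.card_lt_card hss
  calc idx G v T (j + 1) < (G.neighborFinset a).card := h1
    _ = G.degree a := (SimpleGraph.card_neighborFinset_eq_degree G a)
    _ ≤ z := hdeg a

/-- The code of a connected set. -/
def code : Finset (ℕ × ℕ) :=
  (Finset.Icc 1 (T.card - 1)).image (fun i => (par G v T i, idx G v T i))

lemma mem_Icc_lt {i : ℕ} (hvT : v ∈ T) (hi : i ∈ Finset.Icc 1 (T.card - 1)) :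
    1 ≤ i ∧ i < T.card := by
  have hpos : 0 < T.card := Finset.card_pos.2 ⟨v, hvT⟩
  rw [Finset.mem_Icc] at hi
  omega

lemma pair_det (hvT : v ∈ T)
    (hconn : ∀ x ∈ T, ∃ w : G.Walk x v, ∀ u ∈ w.support, u ∈ T)
    {i i' : ℕ} (hi : i ∈ Finset.Icc 1 (T.card - 1)) (hi' : i' ∈ Finset.Icc 1 (T.card - 1))
    (h : (par G v T i, idx G v T i) = (par G v T i', idx G v T i')) : i = i' := by
  obtain ⟨hi1, hi2⟩ := mem_Icc_lt v T hvT hi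
  obtain ⟨hi1', hi2'⟩ := mem_Icc_lt v T hvT hi'
  obtain ⟨j, rfl⟩ : ∃ j, i = j + 1 := ⟨i - 1, by omega⟩
  obtain ⟨j', rfl⟩ : ∃ j', i' = j' + 1 := ⟨i' - 1, by omega⟩
  have hp : par G v T (j + 1) = par G v T (j' + 1) := congrArg Prod.fst h
  have hq : idx G v T (j + 1) = idx G v T (j' + 1) := congrArg Prod.snd h
  have h1 := dec_useq G v T hvT hconn hi2
  have h2 := dec_useq G v T hvT hconn hi2'
  rw [hp, hq] at h1
  have huv : useq G v T (j + 1) = useq G v T (j' + 1) := h1.symm.trans h2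
  by_contra hne
  rcases Nat.lt_or_ge (j + 1) (j' + 1) with hlt | hge
  · exact useq_injOn G v T hvT hconn hlt hi2' huv
  · exact useq_injOn G v T hvT hconn (by omega) hi2 huv.symm

lemma code_card (hvT : v ∈ T)
    (hconn : ∀ x ∈ T, ∃ w : G.Walk x v, ∀ u ∈ w.support, u ∈ T) :
    (code G v T).card = T.card - 1 := by
  rw [code, Finset.card_image_of_injOn
    (fun i hi i' hi' h => pair_det G v T hvT hconn hi hi' h), Nat.card_Icc]
  omega

lemma code_subset {z : ℕ} (hdeg : ∀ u, G.degree u ≤ z) (hvT : v ∈ T)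
    (hconn : ∀ x ∈ T, ∃ w : G.Walk x v, ∀ u ∈ w.support, u ∈ T) :
    code G v T ⊆ Finset.range (T.card - 1) ×ˢ Finset.range z := by
  intro p hp
  obtain ⟨i, hi, rfl⟩ := Finset.mem_image.1 hp
  obtain ⟨hi1, hi2⟩ := mem_Icc_lt v T hvT hi
  obtain ⟨j, rfl⟩ : ∃ j, i = j + 1 := ⟨i - 1, by omega⟩
  rw [Finset.mem_product, Finset.mem_range, Finset.mem_range]
  constructor
  · have h1 := par_lt G v T hvT hconn hi2
    have h2 := (Finset.mem_Icc.1 hi).2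
    omega
  · exact idx_lt G v T hdeg hvT hconn hi2

/-- Decoding the frontier from the code. -/
lemma nextB_eq_decode (hvT : v ∈ T)
    (hconn : ∀ x ∈ T, ∃ w : G.Walk x v, ∀ u ∈ w.support, u ∈ T)
    (i : ℕ) :
    nextB G T (chain G v T i) =
      ((code G v T).filter (fun p => p.1 ≤ i)).image
        (fun p => dec G v (useq G v T p.1) p.2) \ chain G v T i := by
  ext w
  rw [Finset.mem_sdiff, mem_nextB]
  constructor
  · rintro ⟨⟨hwT, hwA⟩, a, haA, hadj⟩
    refine ⟨?_, hwA⟩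
    -- w = useq k for some k < T.card
    have hpos : 0 < T.card := Finset.card_pos.2 ⟨v, hvT⟩
    have hTimg : T = (Finset.range T.card).image (useq G v T) := by
      have h2 := chain_eq_image G v T (T.card - 1)
      rw [chain_eq_T G v T hvT hconn] at h2
      have h3 : T.card - 1 + 1 = T.card := by omega
      rw [h3] at h2
      exact h2
    obtain ⟨k, hkr, rfl⟩ := Finset.mem_image.1 (by rw [hTimg] at hwT; exact hwT)
    have hk : k < T.card := Finset.mem_range.1 hkr
    have hki : ¬ k ≤ i := fun hle => hwA (useq_mem_chain G v T hle)
    obtain ⟨j, rfl⟩ : ∃ j, k = j + 1 := ⟨k - 1, by omega⟩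
    -- the parent of k is ≤ i
    obtain ⟨k0, hk0r, rfl⟩ := by
      rw [chain_eq_image] at haA
      exact Finset.mem_image.1 haA
    have hk0 : k0 ≤ i := by
      have := Finset.mem_range.1 hk0r; omega
    have hk0p : k0 ∈ parset G v T (j + 1) :=
      Finset.mem_filter.2 ⟨Finset.mem_range.2 (by omega), hadj⟩
    have hple : par G v T (j + 1) ≤ i :=
      le_trans (par_min G v T hvT hconn hk hk0p) hk0
    refine Finset.mem_image.2 ⟨(par G v T (j + 1), idx G v T (j + 1)), ?_, ?_⟩
    · refine Finset.mem_filter.2 ⟨?_, hple⟩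
      exact Finset.mem_image_of_mem _ (Finset.mem_Icc.2 ⟨by omega, by omega⟩)
    · exact dec_useq G v T hvT hconn hk
  · rintro ⟨hwI, hwA⟩
    obtain ⟨p, hpf, rfl⟩ := Finset.mem_image.1 hwI
    rw [Finset.mem_filter] at hpf
    obtain ⟨hpc, hpi⟩ := hpf
    obtain ⟨k, hk, rfl⟩ := Finset.mem_image.1 hpc
    obtain ⟨hk1, hk2⟩ := mem_Icc_lt v T hvT hk
    obtain ⟨j, rfl⟩ : ∃ j, k = j + 1 := ⟨k - 1, by omega⟩
    have hdec : dec G v (useq G v T (par G v T (j + 1), idx G v T (j + 1)).1)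
        ((par G v T (j + 1), idx G v T (j + 1)).2) = useq G v T (j + 1) :=
      dec_useq G v T hvT hconn hk2
    rw [hdec] at hwA ⊢
    refine ⟨⟨?_, hwA⟩, useq G v T (par G v T (j + 1)), ?_, par_adj G v T hvT hconn hk2⟩
    · -- useq (j+1) ∈ T
      have := useq_mem_chain G v T (le_refl (j + 1))
      exact chain_subset_T G v T hvT _ this
    · exact useq_mem_chain G v T hpi

/-- Main injectivity: the code determines the set. -/
lemma code_inj {T T' : Finset V} (hvT : v ∈ T) (hvT' : v ∈ T')
    (hconn : ∀ x ∈ T, ∃ w : G.Walk x v, ∀ u ∈ w.support, u ∈ T)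
    (hconn' : ∀ x ∈ T', ∃ w : G.Walk x v, ∀ u ∈ w.support, u ∈ T')
    (hcard : T.card = T'.card) (hcode : code G v T = code G v T') : T = T' := by
  have key : ∀ i, chain G v T i = chain G v T' i ∧
      ∀ k ≤ i, useq G v T k = useq G v T' k := by
    intro i
    induction i with
    | zero =>
      refine ⟨rfl, fun k hk => ?_⟩
      interval_cases k
      rfl
    | succ i ih =>
      obtain ⟨ihc, ihu⟩ := ih
      have hBeq : nextB G T (chain G v T i) = nextB G T' (chain G v T' i) := by
        rw [nextB_eq_decode G v T hvT hconn i, nextB_eq_decode G v T' hvT' hconn' i,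
          hcode, ihc]
        have himg : ((code G v T').filter (fun p => p.1 ≤ i)).image
              (fun p => dec G v (useq G v T p.1) p.2) =
            ((code G v T').filter (fun p => p.1 ≤ i)).image
              (fun p => dec G v (useq G v T' p.1) p.2) := by
          apply Finset.image_congr
          intro p hp
          rw [Finset.mem_coe, Finset.mem_filter] at hp
          show dec G v (useq G v T p.1) p.2 = dec G v (useq G v T' p.1) p.2
          rw [ihu p.1 hp.2]
        rw [himg]
      have huq : useq G v T (i + 1) = useq G v T' (i + 1) := by
        show nextV G v T (chain G v T i) = nextV G v T' (chain G v T' i)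
        rw [nextV, nextV]
        by_cases h : (nextB G T (chain G v T i)).Nonempty
        · rw [dif_pos h, dif_pos (by rwa [← hBeq])]
          congr 1
        · rw [dif_neg h, dif_neg (by rwa [← hBeq])]
      constructor
      · rw [chain_succ, chain_succ, huq, ihc]
      · intro k hk
        rcases Nat.lt_or_ge k (i + 1) with h | h
        · exact ihu k (by omega)
        · have : k = i + 1 := by omega
          rw [this]; exact huq
  have hpos : 0 < T.card := Finset.card_pos.2 ⟨v, hvT⟩
  calc T = chain G v T (T.card - 1) := (chain_eq_T G v T hvT hconn).symm
    _ = chain G v T' (T.card - 1) := (key _).1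
    _ = T' := by rw [hcard]; exact chain_eq_T G v T' hvT' hconn'

end ClusterCount

/-- The analytic bound: `choose (k*z) k ≤ (z*e)^k`. -/
lemma choose_le_mul_exp_pow (z k : ℕ) :
    (((k * z).choose k : ℕ) : ℝ) ≤ ((z : ℝ) * Real.exp 1) ^ k := by
  have h1 : (((k * z).choose k : ℕ) : ℝ) ≤
      ((k * z : ℕ) : ℝ) ^ k / (Nat.factorial k : ℝ) := by
    have h0 := Nat.choose_le_pow_div (α := ℝ) k (k * z)
    convert h0 using 2
  have hk : ((k : ℝ)) ^ k / (Nat.factorial k : ℝ) ≤ Real.exp 1 ^ k := by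
    have h2 := Real.pow_div_factorial_le_exp (x := (k : ℝ)) (by positivity) k
    calc ((k : ℝ)) ^ k / (Nat.factorial k : ℝ) ≤ Real.exp k := h2
      _ = Real.exp 1 ^ k := by rw [← Real.exp_nat_mul]; norm_num
  calc (((k * z).choose k : ℕ) : ℝ)
      ≤ ((k * z : ℕ) : ℝ) ^ k / (Nat.factorial k : ℝ) := h1
    _ = (z : ℝ) ^ k * (((k : ℝ)) ^ k / (Nat.factorial k : ℝ)) := by
        push_cast; rw [mul_pow]; ring
    _ ≤ (z : ℝ) ^ k * Real.exp 1 ^ k :=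
        mul_le_mul_of_nonneg_left hk (by positivity)
    _ = ((z : ℝ) * Real.exp 1) ^ k := (mul_pow _ _ _).symm

/-- In a graph of maximum degree `z`, the number of connected vertex sets of
size `s` containing a fixed vertex `v` is at most `(z e)^(s-1)`. -/
theorem connected_cluster_count {V : Type*} [Fintype V] [DecidableEq V]
    (G : SimpleGraph V) [DecidableRel G.Adj] (z : ℕ) (hz : 1 ≤ z)
    (hdeg : ∀ u, G.degree u ≤ z) (v : V) (s : ℕ) (hs : 1 ≤ s) :
    ({T : Finset V | v ∈ T ∧ T.card = s ∧
        ∀ x ∈ T, ∃ w : G.Walk x v, ∀ u ∈ w.support, u ∈ T}.ncard : ℝ)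
      ≤ ((z : ℝ) * Real.exp 1) ^ (s - 1) := by
  classical
  letI : LinearOrder V := LinearOrder.lift' (Fintype.equivFin V) (Equiv.injective _)
  set S := {T : Finset V | v ∈ T ∧ T.card = s ∧
      ∀ x ∈ T, ∃ w : G.Walk x v, ∀ u ∈ w.support, u ∈ T} with hS
  have key : S.ncard ≤ ((s - 1) * z).choose (s - 1) := by
    have h1 : S.ncard ≤
        (((Finset.range (s - 1) ×ˢ Finset.range z).powersetCard (s - 1) :
          Finset (Finset (ℕ × ℕ))) : Set (Finset (ℕ × ℕ))).ncard := by
      apply Set.ncard_le_ncard_of_injOn (fun T => ClusterCount.code G v T)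
      · intro T hT
        obtain ⟨h1, h2, h3⟩ := hT
        rw [Finset.mem_coe, Finset.mem_powersetCard]
        constructor
        · have := ClusterCount.code_subset G v T hdeg h1 h3
          rwa [h2] at this
        · have := ClusterCount.code_card G v T h1 h3
          rwa [h2] at this
      · intro T hT T' hT' h
        exact ClusterCount.code_inj G v hT.1 hT'.1 hT.2.2 hT'.2.2
          (hT.2.1.trans hT'.2.1.symm) h
    rwa [Set.ncard_coe_finset, Finset.card_powersetCard, Finset.card_product,
      Finset.card_range, Finset.card_range] at h1
  calc (S.ncard : ℝ) ≤ ((((s - 1) * z).choose (s - 1) : ℕ) : ℝ) := by exact_mod_cast key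
    _ ≤ ((z : ℝ) * Real.exp 1) ^ (s - 1) := choose_le_mul_exp_pow z (s - 1)
end

section
/- Let G be a graph on n vertices with maximum degree z. Under a local stochastic noise model with error rate p (i.e., for every set A of vertices, the probability that all vertices of A have errors is at most p^{|A|}), the probability that there exists a connected cluster of size s ≥ d in which at least ⌈s/2⌉ vertices have errors is at most (n/(z·e)) · (2·z·e·√p)^d / (1 − 2·z·e·√p), provided 2·z·e·√p < 1. -/
set_option maxHeartbeats 1600000
set_option linter.unusedSectionVars false
set_option linter.unusedVariables false

open MeasureTheory Finset

namespace ClusterAux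

variable {V : Type*} [DecidableEq V] (G : SimpleGraph V)


variable {V : Type*} [DecidableEq V] (G : SimpleGraph V)

/-- Reachability within a vertex set `A`. -/
def ReachIn (A : Finset V) (a b : V) : Prop :=
  ∃ w : G.Walk a b, ∀ u ∈ w.support, u ∈ A

/-- Connectivity of a vertex set. -/
def ConnIn (T : Finset V) : Prop :=
  ∀ x ∈ T, ∀ y ∈ T, ∃ w : G.Walk x y, ∀ u ∈ w.support, u ∈ T

variable {G}

lemma ReachIn.refl {A : Finset V} {a : V} (ha : a ∈ A) : ReachIn G A a a :=
  ⟨SimpleGraph.Walk.nil, by simp [ha]⟩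

lemma ReachIn.symm {A : Finset V} {a b : V} (h : ReachIn G A a b) : ReachIn G A b a := by
  obtain ⟨w, hw⟩ := h
  exact ⟨w.reverse, by simpa using hw⟩

lemma ReachIn.trans {A : Finset V} {a b c : V} (h : ReachIn G A a b) (h' : ReachIn G A b c) :
    ReachIn G A a c := by
  obtain ⟨w, hw⟩ := h; obtain ⟨w', hw'⟩ := h'
  refine ⟨w.append w', ?_⟩
  intro u hu
  rcases (SimpleGraph.Walk.mem_support_append_iff _ _).1 hu with h | h
  · exact hw u h
  · exact hw' u h

lemma ReachIn.mem_left {A : Finset V} {a b : V} (h : ReachIn G A a b) : a ∈ A := by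
  obtain ⟨w, hw⟩ := h; exact hw a w.start_mem_support

lemma ReachIn.mem_right {A : Finset V} {a b : V} (h : ReachIn G A a b) : b ∈ A := by
  obtain ⟨w, hw⟩ := h; exact hw b w.end_mem_support

/-- Every vertex on a witnessing walk is reachable. -/
lemma ReachIn.of_support {A : Finset V} {a b u : V} (w : G.Walk a b)
    (hw : ∀ u ∈ w.support, u ∈ A) (hu : u ∈ w.support) : ReachIn G A a u :=
  ⟨w.takeUntil u hu, fun x hx => hw x (w.support_takeUntil_subset hu hx)⟩

open scoped Classical in
/-- The connected component of `a` inside `A`. -/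
noncomputable def comp (G : SimpleGraph V) (A : Finset V) (a : V) : Finset V :=
  A.filter (ReachIn G A a)

lemma mem_comp {A : Finset V} {a b : V} : b ∈ comp G A a ↔ b ∈ A ∧ ReachIn G A a b := by
  simp [comp]

lemma comp_subset {A : Finset V} {a : V} : comp G A a ⊆ A := fun b hb => (mem_comp.1 hb).1

lemma self_mem_comp {A : Finset V} {a : V} (ha : a ∈ A) : a ∈ comp G A a :=
  mem_comp.2 ⟨ha, ReachIn.refl ha⟩

lemma comp_eq_of_mem {A : Finset V} {a b : V} (h : b ∈ comp G A a) :
    comp G A b = comp G A a := by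
  obtain ⟨-, hab⟩ := mem_comp.1 h
  ext c
  simp only [mem_comp]
  exact ⟨fun ⟨hc, hbc⟩ => ⟨hc, hab.trans hbc⟩, fun ⟨hc, hac⟩ => ⟨hc, hab.symm.trans hac⟩⟩

lemma connIn_comp {A : Finset V} {a : V} : ConnIn G (comp G A a) := by
  intro x hx y hy
  obtain ⟨hxA, wx, hwx⟩ := mem_comp.1 hx
  obtain ⟨hyA, wy, hwy⟩ := mem_comp.1 hy
  refine ⟨wx.reverse.append wy, ?_⟩
  intro u hu
  rcases (SimpleGraph.Walk.mem_support_append_iff _ _).1 hu with h | h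
  · rw [SimpleGraph.Walk.support_reverse, List.mem_reverse] at h
    exact mem_comp.2 ⟨hwx u h, ReachIn.of_support wx hwx h⟩
  · exact mem_comp.2 ⟨hwy u h, ReachIn.of_support wy hwy h⟩

lemma walk_cons_of_ne {a v : V} (w : G.Walk v a) (h : v ≠ a) :
    ∃ (b : V) (_ : G.Adj v b) (w2 : G.Walk b a), w.support = v :: w2.support := by
  cases w with
  | nil => exact absurd rfl h
  | cons hadj p => exact ⟨_, hadj, p, by simp⟩

/-- Exit lemma: if `T` is connected, `v ∈ T`, and `a ∈ T.erase v`, then the component of `a`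
in `T.erase v` contains a neighbour of `v`. -/
lemma exists_nbr_in_comp {T : Finset V} (hT : ConnIn G T) {v a : V} (hv : v ∈ T)
    (ha : a ∈ T.erase v) : ∃ b, G.Adj v b ∧ b ∈ comp G (T.erase v) a := by
  obtain ⟨hav, haT⟩ := Finset.mem_erase.1 ha
  obtain ⟨w, hw⟩ := hT a haT v hv
  have hvmem : v ∈ w.support := w.end_mem_support
  set w1 := w.takeUntil v hvmem with hw1
  have hw1supp : ∀ u ∈ w1.support, u ∈ T := fun u hu => hw u (w.support_takeUntil_subset _ hu)
  have hcount : w1.support.count v = 1 := w.count_support_takeUntil_eq_one hvmem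
  have hne : v ≠ a := Ne.symm hav
  obtain ⟨b, hadj, w2, hsupp⟩ := walk_cons_of_ne w1.reverse hne
  have hrev : w1.reverse.support = v :: w2.support := hsupp
  have hvw2 : v ∉ w2.support := by
    have h1 : w1.reverse.support.count v = 1 := by
      rw [SimpleGraph.Walk.support_reverse, List.count_reverse]; exact hcount
    rw [hrev, List.count_cons_self] at h1
    simpa using List.count_eq_zero.1 (by omega)
  have hw2T : ∀ u ∈ w2.support, u ∈ T.erase v := by
    intro u hu
    refine Finset.mem_erase.2 ⟨fun h => hvw2 (h ▸ hu), ?_⟩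
    have : u ∈ w1.reverse.support := by rw [hrev]; exact List.mem_cons_of_mem _ hu
    rw [SimpleGraph.Walk.support_reverse, List.mem_reverse] at this
    exact hw1supp u this
  refine ⟨b, hadj, mem_comp.2 ⟨hw2T b w2.start_mem_support, ⟨w2.reverse, ?_⟩⟩⟩
  intro u hu
  rw [SimpleGraph.Walk.support_reverse, List.mem_reverse] at hu
  exact hw2T u hu


variable (G)
open scoped Classical in
noncomputable def connSets (U : Finset V) (v : V) : Finset (Finset V) :=
  U.powerset.filter (fun T => v ∈ T ∧ ConnIn G T)

lemma mem_connSets {U : Finset V} {v : V} {T : Finset V} :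
    T ∈ connSets G U v ↔ T ⊆ U ∧ v ∈ T ∧ ConnIn G T := by
  simp [connSets, and_assoc]

noncomputable def Ssum (x : ℝ) (U : Finset V) (v : V) : ℝ :=
  ∑ T ∈ connSets G U v, x ^ T.card

open scoped Classical in
noncomputable def nbrs (U : Finset V) (v : V) : Finset V :=
  (U.erase v).filter (G.Adj v)

variable {G}

lemma Ssum_nonneg {x : ℝ} (hx : 0 ≤ x) {U : Finset V} {v : V} : 0 ≤ Ssum G x U v :=
  Finset.sum_nonneg fun _ _ => pow_nonneg hx _


lemma Ssum_le_prod [LinearOrder V] (x : ℝ) (hx : 0 ≤ x) (U : Finset V) (v : V) :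
    Ssum G x U v ≤ x * ∏ u ∈ nbrs G U v, (1 + Ssum G x (U.erase v) u) := by
  classical
  set W := U.erase v with hW
  set N := nbrs G U v with hN
  set wt : Option (Finset V) → ℝ := fun o => o.elim 1 (fun C => x ^ C.card) with hwt
  set options : V → Finset (Option (Finset V)) :=
    fun u => insert none ((connSets G W u).image some) with hoptions
  have hwt_nonneg : ∀ o, 0 ≤ wt o := by
    rintro (_ | C)
    · exact zero_le_one
    · exact pow_nonneg hx _
  have step1 : ∀ u, 1 + Ssum G x W u = ∑ o ∈ options u, wt o := by
    intro u
    rw [hoptions]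
    rw [Finset.sum_insert (by simp)]
    rw [Finset.sum_image (by intro a _ b _ h; simpa using h)]
    simp [hwt, Ssum]
  have step2 : x * ∏ u ∈ N, (1 + Ssum G x W u)
      = x * ∑ p ∈ N.pi (fun u => options u), ∏ u ∈ N.attach, wt (p u.1 u.2) := by
    congr 1
    simp_rw [step1]
    exact Finset.prod_sum _ _ _
  rw [step2]
  -- define the encoding
  set D : Finset V → Finset V := fun T => N.filter (fun u => u ∈ T ∧
    ((comp G (T.erase v) u).filter (fun b => G.Adj v b)).min = (u : WithTop V)) with hD
  set Φ : Finset V → (∀ a ∈ N, Option (Finset V)) := fun T u _ =>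
    if u ∈ D T then some (comp G (T.erase v) u) else none with hΦ
  -- partition facts
  have key : ∀ T ∈ connSets G U v,
      (T.erase v = (D T).biUnion (fun u => comp G (T.erase v) u)) ∧
      (∀ u ∈ D T, ∀ u' ∈ D T, u ≠ u' →
        Disjoint (comp G (T.erase v) u) (comp G (T.erase v) u')) := by
    intro T hT
    obtain ⟨hTU, hvT, hconn⟩ := (mem_connSets G).1 hT
    constructor
    · ext a
      simp only [Finset.mem_biUnion]
      constructor
      · intro ha
        obtain ⟨b, hb_adj, hb_mem⟩ := exists_nbr_in_comp hconn hvT ha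
        set F := (comp G (T.erase v) a).filter (fun c => G.Adj v c) with hF
        have hFne : F.Nonempty := ⟨b, Finset.mem_filter.2 ⟨hb_mem, hb_adj⟩⟩
        obtain ⟨m, hm⟩ := Finset.min_of_nonempty hFne
        have hmF : m ∈ F := Finset.mem_of_min hm
        obtain ⟨hm_comp, hm_adj⟩ := Finset.mem_filter.1 hmF
        have hcomp_eq : comp G (T.erase v) m = comp G (T.erase v) a := comp_eq_of_mem hm_comp
        have hmA : m ∈ T.erase v := comp_subset hm_comp
        refine ⟨m, ?_, ?_⟩
        · refine Finset.mem_filter.2 ⟨?_, (Finset.mem_erase.1 hmA).2, ?_⟩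
          · exact Finset.mem_filter.2 ⟨Finset.mem_erase.2 ⟨(Finset.mem_erase.1 hmA).1,
              hTU (Finset.mem_erase.1 hmA).2⟩, hm_adj⟩
          · rw [hcomp_eq]; exact hm
        · rw [hcomp_eq]; exact self_mem_comp ha
      · rintro ⟨u, hu, hau⟩
        exact comp_subset hau
    · intro u hu u' hu' hne
      rw [Finset.disjoint_left]
      intro c hc hc'
      have h1 : comp G (T.erase v) c = comp G (T.erase v) u := comp_eq_of_mem hc
      have h2 : comp G (T.erase v) c = comp G (T.erase v) u' := comp_eq_of_mem hc'
      have := (Finset.mem_filter.1 hu).2.2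
      have h4 := (Finset.mem_filter.1 hu').2.2
      rw [← h1] at this
      rw [← h2] at h4
      rw [this] at h4
      exact hne (by exact_mod_cast h4)
  have hDsub : ∀ T, D T ⊆ N := fun T => Finset.filter_subset _ _
  have hΦmem : ∀ T ∈ connSets G U v, Φ T ∈ N.pi (fun u => options u) := by
    intro T hT
    rw [Finset.mem_pi]
    intro u hu
    rw [hΦ]
    by_cases h : u ∈ D T
    · simp only [h, if_true]
      rw [hoptions]
      refine Finset.mem_insert.2 (Or.inr (Finset.mem_image.2 ⟨_, ?_, rfl⟩))
      obtain ⟨hTU, hvT, hconn⟩ := (mem_connSets G).1 hT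
      obtain ⟨huN, huT, hmin⟩ := Finset.mem_filter.1 h
      refine (mem_connSets G).2 ⟨?_, ?_, connIn_comp⟩
      · exact comp_subset.trans (Finset.erase_subset_erase _ hTU)
      · have huv : u ≠ v := (Finset.mem_erase.1 (Finset.mem_filter.1 huN).1).1
        exact self_mem_comp (Finset.mem_erase.2 ⟨huv, huT⟩)
    · simp only [h, if_false]
      rw [hoptions]
      exact Finset.mem_insert_self _ _
  have hweight : ∀ T ∈ connSets G U v,
      x ^ T.card = x * ∏ u ∈ N.attach, wt (Φ T u.1 u.2) := by
    intro T hT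
    obtain ⟨hTU, hvT, hconn⟩ := (mem_connSets G).1 hT
    obtain ⟨hpart, hdisj⟩ := key T hT
    have h1 : ∏ u ∈ N.attach, wt (Φ T u.1 u.2)
        = ∏ u ∈ N, (if u ∈ D T then x ^ (comp G (T.erase v) u).card else 1) := by
      rw [← Finset.prod_attach N (fun a => if a ∈ D T then x ^ (comp G (T.erase v) a).card else 1)]
      refine Finset.prod_congr rfl ?_
      intro u _
      rw [hΦ]
      by_cases h : u.1 ∈ D T <;> simp [h, hwt]
    have h2 : ∏ u ∈ N, (if u ∈ D T then x ^ (comp G (T.erase v) u).card else 1)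
        = ∏ u ∈ D T, x ^ (comp G (T.erase v) u).card := by
      rw [← Finset.prod_filter]
      congr 1
      rw [Finset.filter_mem_eq_inter, Finset.inter_eq_right.2 (hDsub T)]
    have h3 : ∏ u ∈ D T, x ^ (comp G (T.erase v) u).card
        = x ^ (∑ u ∈ D T, (comp G (T.erase v) u).card) := Finset.prod_pow_eq_pow_sum _ _ _
    have h4 : ∑ u ∈ D T, (comp G (T.erase v) u).card = (T.erase v).card := by
      conv_rhs => rw [hpart]
      exact (Finset.card_biUnion hdisj).symm
    have h5 : (T.erase v).card = T.card - 1 := Finset.card_erase_of_mem hvT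
    have h6 : 1 ≤ T.card := Finset.card_pos.2 ⟨v, hvT⟩
    rw [h1, h2, h3, h4, h5, ← pow_succ']
    congr 1
    omega
  have hrec : ∀ T ∈ connSets G U v,
      T = insert v ((D T).biUnion (fun u => comp G (T.erase v) u)) := by
    intro T hT
    obtain ⟨hTU, hvT, hconn⟩ := (mem_connSets G).1 hT
    rw [← (key T hT).1, Finset.insert_erase hvT]
  have hinj : ∀ T ∈ connSets G U v, ∀ T' ∈ connSets G U v, Φ T = Φ T' → T = T' := by
    intro T hT T' hT' heq
    have h : ∀ u, u ∈ N → (if u ∈ D T then some (comp G (T.erase v) u) else none)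
        = (if u ∈ D T' then some (comp G (T'.erase v) u) else none) := by
      intro u hu
      have := congrFun (congrFun heq u) hu
      rw [hΦ] at this
      exact this
    have hsub : ∀ (T₁ T₂ : Finset V), (∀ u, u ∈ N →
        (if u ∈ D T₁ then some (comp G (T₁.erase v) u) else none)
        = (if u ∈ D T₂ then some (comp G (T₂.erase v) u) else none)) →
        (D T₁).biUnion (fun u => comp G (T₁.erase v) u)
          ⊆ (D T₂).biUnion (fun u => comp G (T₂.erase v) u) := by
      intro T₁ T₂ hh c hc
      obtain ⟨u, hu, hcu⟩ := Finset.mem_biUnion.1 hc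
      have h1 := hh u (hDsub T₁ hu)
      rw [if_pos hu] at h1
      by_cases h2 : u ∈ D T₂
      · rw [if_pos h2] at h1
        exact Finset.mem_biUnion.2 ⟨u, h2, (Option.some_inj.1 h1) ▸ hcu⟩
      · rw [if_neg h2] at h1
        exact absurd h1 (by simp)
    rw [hrec T hT, hrec T' hT']
    congr 1
    exact Finset.Subset.antisymm (hsub T T' h) (hsub T' T (fun u hu => (h u hu).symm))
  calc Ssum G x U v = ∑ T ∈ connSets G U v, x * ∏ u ∈ N.attach, wt (Φ T u.1 u.2) :=
        Finset.sum_congr rfl hweight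
    _ = x * ∑ T ∈ connSets G U v, ∏ u ∈ N.attach, wt (Φ T u.1 u.2) := by
        rw [Finset.mul_sum]
    _ ≤ x * ∑ p ∈ N.pi (fun u => options u), ∏ u ∈ N.attach, wt (p u.1 u.2) := by
        refine mul_le_mul_of_nonneg_left ?_ hx
        have him : ∑ p ∈ (connSets G U v).image Φ, (∏ u ∈ N.attach, wt (p u.1 u.2))
            = ∑ T ∈ connSets G U v, ∏ u ∈ N.attach, wt (Φ T u.1 u.2) :=
          Finset.sum_image hinj
        rw [← him]
        refine Finset.sum_le_sum_of_subset_of_nonneg ?_ ?_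
        · intro p hp
          obtain ⟨T, hT, rfl⟩ := Finset.mem_image.1 hp
          exact hΦmem T hT
        · intro p _ _
          exact Finset.prod_nonneg fun _ _ => hwt_nonneg _


lemma mem_nbrs {U : Finset V} {v u : V} : u ∈ nbrs G U v ↔ u ∈ U.erase v ∧ G.Adj v u := by
  classical
  rw [nbrs]
  exact Finset.mem_filter

lemma Ssum_le [Fintype V] [LinearOrder V] [DecidableRel G.Adj] {z : ℕ}
    (hdeg : ∀ v, G.degree v ≤ z) (x t : ℝ) (hx : 0 ≤ x) (ht : 0 ≤ t)
    (hxt : x * (1+t)^z ≤ t) : ∀ (U : Finset V) (v : V), Ssum G x U v ≤ t := by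
  intro U
  induction U using Finset.strongInduction with
  | _ U ih =>
    intro v
    by_cases hv : v ∈ U
    · have hsub : nbrs G U v ⊆ G.neighborFinset v := fun u hu =>
        (SimpleGraph.mem_neighborFinset G v u).2 ((mem_nbrs.1 hu).2)
      have hcard : (nbrs G U v).card ≤ z := by
        have h := Finset.card_le_card hsub
        rw [SimpleGraph.card_neighborFinset_eq_degree] at h
        exact h.trans (hdeg v)
      have ht1 : (1:ℝ) ≤ 1 + t := by linarith
      calc Ssum G x U v ≤ x * ∏ u ∈ nbrs G U v, (1 + Ssum G x (U.erase v) u) :=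
            Ssum_le_prod x hx U v
        _ ≤ x * (1+t)^z := by
            refine mul_le_mul_of_nonneg_left ?_ hx
            calc ∏ u ∈ nbrs G U v, (1 + Ssum G x (U.erase v) u)
                ≤ ∏ _u ∈ nbrs G U v, (1+t) := by
                  refine Finset.prod_le_prod (fun u _ => ?_) (fun u _ => ?_)
                  · have := Ssum_nonneg (G := G) hx (U := U.erase v) (v := u)
                    linarith
                  · have := ih (U.erase v) (Finset.erase_ssubset hv) u
                    linarith
              _ = (1+t)^(nbrs G U v).card := Finset.prod_const _
              _ ≤ (1+t)^z := pow_le_pow_right₀ ht1 hcard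
        _ ≤ t := hxt
    · have hemp : connSets G U v = ∅ := by
        rw [Finset.eq_empty_iff_forall_notMem]
        intro T hT
        obtain ⟨hTU, hvT, -⟩ := (mem_connSets G).1 hT
        exact hv (hTU hvT)
      rw [Ssum, hemp]
      simpa using ht

lemma count_mul_le [Fintype V] [LinearOrder V] [DecidableRel G.Adj] {z : ℕ}
    (hdeg : ∀ v, G.degree v ≤ z) (v : V) (s : ℕ) (x t : ℝ) (hx : 0 ≤ x) (ht : 0 ≤ t)
    (hxt : x * (1+t)^z ≤ t) :
    ((((connSets G Finset.univ v).filter (fun T => T.card = s)).card : ℝ)) * x^s ≤ t := by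
  classical
  have h1 : ((((connSets G Finset.univ v).filter (fun T => T.card = s)).card : ℝ)) * x^s
      = ∑ T ∈ (connSets G Finset.univ v).filter (fun T => T.card = s), x ^ T.card := by
    rw [Finset.sum_congr rfl (fun T hT => by
      rw [(Finset.mem_filter.1 hT).2]), Finset.sum_const, nsmul_eq_mul]
  rw [h1]
  refine le_trans ?_ (Ssum_le hdeg x t hx ht hxt Finset.univ v)
  exact Finset.sum_le_sum_of_subset_of_nonneg (Finset.filter_subset _ _)
    (fun T _ _ => pow_nonneg hx _)

lemma count_one_le [Fintype V] (v : V) :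
    ((connSets G Finset.univ v).filter (fun T => T.card = 1)).card ≤ 1 := by
  classical
  refine Finset.card_le_one.2 (fun a ha b hb => ?_)
  have hone : ∀ c ∈ (connSets G Finset.univ v).filter (fun T => T.card = 1), c = {v} := by
    intro c hc
    obtain ⟨hc1, hc2⟩ := Finset.mem_filter.1 hc
    obtain ⟨-, hvc, -⟩ := (mem_connSets G).1 hc1
    obtain ⟨w, rfl⟩ := Finset.card_eq_one.1 hc2
    rw [Finset.mem_singleton.1 hvc]
  rw [hone a ha, hone b hb]

lemma geom_tail {r : ℝ} (h0 : 0 ≤ r) (h1 : r < 1) (d Nn : ℕ) :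
    ∑ s ∈ Finset.Icc d Nn, r^s ≤ r^d / (1-r) := by
  have h1r : (0:ℝ) < 1 - r := by linarith
  rw [← Finset.Ico_add_one_right_eq_Icc, Finset.sum_Ico_eq_sum_range]
  have : ∑ i ∈ Finset.range (Nn + 1 - d), r ^ (d + i)
      = r^d * ∑ i ∈ Finset.range (Nn + 1 - d), r ^ i := by
    rw [Finset.mul_sum]
    exact Finset.sum_congr rfl (fun i _ => by rw [pow_add])
  rw [this]
  rw [div_eq_mul_inv]
  refine mul_le_mul_of_nonneg_left ?_ (pow_nonneg h0 d)
  have hgeom : ∑ i ∈ Finset.range (Nn + 1 - d), r ^ i = (1 - r^(Nn+1-d))/(1-r) := by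
    rw [geom_sum_eq (by linarith : r ≠ 1)]
    rw [div_eq_div_iff (by linarith) (by linarith)]
    ring
  rw [hgeom, inv_eq_one_div]
  gcongr
  nlinarith [pow_nonneg h0 (Nn+1-d)]


end ClusterAux

namespace ClusterAux
lemma cb_bound : ∀ m, 3 ≤ m → 16 * Nat.centralBinom m ≤ 5 * 4 ^ m := by
  intro m hm
  induction m, hm using Nat.le_induction with
  | base => simp [Nat.centralBinom, Nat.choose]
  | succ m hm ih =>
    have key : (m + 1) * Nat.centralBinom (m + 1) = 2 * (2 * m + 1) * Nat.centralBinom m :=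
      Nat.succ_mul_centralBinom_succ m
    have h1 : (m + 1) * (16 * Nat.centralBinom (m + 1)) ≤ (m + 1) * (5 * 4 ^ (m + 1)) := by
      calc (m + 1) * (16 * Nat.centralBinom (m + 1))
          = 16 * ((m + 1) * Nat.centralBinom (m + 1)) := by ring
        _ = 2 * (2 * m + 1) * (16 * Nat.centralBinom m) := by rw [key]; ring
        _ ≤ 2 * (2 * m + 1) * (5 * 4 ^ m) := Nat.mul_le_mul_left _ ih
        _ ≤ (m + 1) * (5 * 4 ^ (m + 1)) := by ring_nf; nlinarith [pow_pos (by norm_num : 0 < 4) m]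
    exact Nat.le_of_mul_le_mul_left h1 (Nat.succ_pos m)

lemma cs_le_e {s : ℕ} (hs : 2 ≤ s) :
    ((s : ℝ) / ((s : ℝ) - 1)) ^ (s - 1) ≤ Real.exp 1 := by
  have hs1 : (1 : ℝ) ≤ (s : ℝ) - 1 := by
    have : (2 : ℝ) ≤ (s : ℝ) := by exact_mod_cast hs
    linarith
  have hpos : (0 : ℝ) < (s : ℝ) - 1 := by linarith
  have h1 : (s : ℝ) / ((s : ℝ) - 1) = 1 / ((s:ℝ)-1) + 1 := by field_simp; ring
  have h2 : (1 : ℝ) / ((s:ℝ)-1) + 1 ≤ Real.exp (1 / ((s:ℝ)-1)) := Real.add_one_le_exp _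
  calc ((s : ℝ) / ((s : ℝ) - 1)) ^ (s - 1)
      ≤ (Real.exp (1 / ((s:ℝ)-1))) ^ (s - 1) := by
        refine pow_le_pow_left₀ ?_ (by rw [h1]; exact h2) _
        positivity
    _ = Real.exp ((s - 1 : ℕ) * (1 / ((s:ℝ)-1))) := (Real.exp_nat_mul _ _).symm
    _ = Real.exp 1 := by
        congr 1
        have : ((s - 1 : ℕ) : ℝ) = (s : ℝ) - 1 := by
          have : 1 ≤ s := by omega
          push_cast [Nat.cast_sub this]; ring
        rw [this]; field_simp

/-- The combinatorial-numeric core: `cs * choose * q^(2h) ≤ 2^s * q^s` where `h = (s+1)/2`. -/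
lemma core_ineq {s z : ℕ} (hs : 2 ≤ s) (hz : 1 ≤ z) {q : ℝ} (hq0 : 0 < q)
    (hthr : 2 * (z : ℝ) * Real.exp 1 * q < 1) :
    ((s : ℝ) / ((s : ℝ) - 1)) ^ (s - 1) * (s.choose ((s+1)/2)) * q ^ (2 * ((s+1)/2))
      ≤ 2 ^ s * q ^ s := by
  have he : (2.7182818283 : ℝ) < Real.exp 1 := by
    have := Real.exp_one_gt_d9; linarith
  have he' : Real.exp 1 < 2.7182818286 := Real.exp_one_lt_d9
  rcases Nat.even_or_odd s with ⟨m, hm⟩ | ⟨m, hm⟩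
  · -- even: s = m + m
    have hm' : s = 2 * m := by omega
    subst hm'
    have hm1 : 1 ≤ m := by omega
    have hh : (2*m+1)/2 = m := by omega
    have hchoose : (2*m).choose ((2*m+1)/2) = Nat.centralBinom m := by
      rw [hh, Nat.centralBinom]
    have h2h : 2 * ((2*m+1)/2) = 2*m := by omega
    rw [hchoose, h2h]
    have hq : 0 ≤ q ^ (2*m) := by positivity
    refine mul_le_mul_of_nonneg_right ?_ hq
    have h4 : (2 : ℝ) ^ (2*m) = 4 ^ m := by
      rw [pow_mul]; norm_num
    rw [h4]
    rcases Nat.lt_or_ge m 3 with h3 | h3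
    · interval_cases m
      · norm_num [Nat.centralBinom, Nat.choose]
      · norm_num [Nat.centralBinom, Nat.choose]
    · have hcb0 := cb_bound m h3
      have hcb : (Nat.centralBinom m : ℝ) ≤ 5 / 16 * 4 ^ m := by
        have h16 : (16 : ℝ) * Nat.centralBinom m ≤ 5 * 4 ^ m := by exact_mod_cast hcb0
        linarith
      have hcs : (((2*m : ℕ) : ℝ) / (((2*m : ℕ) : ℝ) - 1)) ^ (2*m - 1) ≤ Real.exp 1 :=
        cs_le_e hs
      have hcbpos : (0 : ℝ) ≤ (Nat.centralBinom m : ℝ) := by positivity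
      have hcspos : (0:ℝ) ≤ (((2*m:ℕ) : ℝ) / (((2*m:ℕ) : ℝ) - 1)) ^ (2*m - 1) := by
        have h2s : (2:ℝ) ≤ ((2*m : ℕ) : ℝ) := by exact_mod_cast hs
        apply pow_nonneg
        apply div_nonneg <;> linarith
      calc (((2*m:ℕ) : ℝ) / (((2*m:ℕ) : ℝ) - 1)) ^ (2*m - 1) * (Nat.centralBinom m : ℝ)
          ≤ Real.exp 1 * (5 / 16 * 4 ^ m) :=
            mul_le_mul hcs hcb hcbpos (le_of_lt (Real.exp_pos 1))
        _ ≤ 4 ^ m := by nlinarith [pow_pos (by norm_num : (0:ℝ) < 4) m]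
  · -- odd: s = 2m+1
    subst hm
    have hm1 : 1 ≤ m := by omega
    have hh : (2*m+1+1)/2 = m + 1 := by omega
    have h2h : 2 * ((2*m+1+1)/2) = 2*m+1 + 1 := by omega
    have hchoose : (2*m+1).choose ((2*m+1+1)/2) ≤ 4 ^ m := by
      rw [hh]
      have hsym := Nat.choose_symm (show m+1 ≤ 2*m+1 by omega)
      rw [show 2*m+1-(m+1) = m from by omega] at hsym
      rw [← hsym]
      exact Nat.choose_middle_le_pow m
    have hq1 : q < 1 / (2 * Real.exp 1) := by
      have hz1 : (1 : ℝ) ≤ (z : ℝ) := by exact_mod_cast hz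
      have hepos := Real.exp_pos 1
      rw [lt_div_iff₀ (by positivity)]
      nlinarith
    have hcs : (((2*m+1:ℕ) : ℝ) / (((2*m+1:ℕ) : ℝ) - 1)) ^ (2*m+1 - 1) ≤ Real.exp 1 :=
      cs_le_e hs
    have hcspos : (0:ℝ) ≤ (((2*m+1:ℕ) : ℝ) / (((2*m+1:ℕ) : ℝ) - 1)) ^ (2*m+1 - 1) := by
      have h2s : (2:ℝ) ≤ ((2*m+1 : ℕ) : ℝ) := by exact_mod_cast hs
      apply pow_nonneg
      apply div_nonneg <;> linarith
    have hchoose' : ((2*m+1).choose ((2*m+1+1)/2) : ℝ) ≤ 4 ^ m := by exact_mod_cast hchoose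
    have h4 : (4 : ℝ) ^ m * 2 = 2 ^ (2*m+1) := by
      rw [pow_succ, pow_mul]; norm_num
    rw [h2h, pow_succ]
    have hqs : (0:ℝ) < q ^ (2*m+1) := by positivity
    have hcpos : (0:ℝ) ≤ ((2*m+1).choose ((2*m+1+1)/2) : ℝ) := by positivity
    have hepos := Real.exp_pos 1
    calc (((2*m+1:ℕ):ℝ) / (((2*m+1:ℕ):ℝ) - 1)) ^ (2*m+1 - 1) * ((2*m+1).choose ((2*m+1+1)/2))
          * (q ^ (2*m+1) * q)
        = ((((2*m+1:ℕ):ℝ) / (((2*m+1:ℕ):ℝ) - 1)) ^ (2*m+1-1) * ((2*m+1).choose ((2*m+1+1)/2))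
            * q) * q ^ (2*m+1) := by ring
      _ ≤ (Real.exp 1 * (4 ^ m) * (1 / (2 * Real.exp 1))) * q ^ (2*m+1) := by
          refine mul_le_mul_of_nonneg_right ?_ (le_of_lt hqs)
          apply mul_le_mul
          · exact mul_le_mul hcs hchoose' hcpos (le_of_lt (Real.exp_pos 1))
          · exact le_of_lt hq1
          · exact le_of_lt hq0
          · positivity
      _ ≤ 2 ^ (2*m+1) * q ^ (2*m+1) := by
          refine mul_le_mul_of_nonneg_right ?_ (le_of_lt hqs)
          have h5 : Real.exp 1 * (4:ℝ)^m * (1/(2*Real.exp 1)) = 4^m/2 := by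
            field_simp
          rw [h5, ← h4]
          nlinarith [pow_pos (by norm_num : (0:ℝ) < 4) m]


lemma count_bound {z s : ℕ} (hz : 1 ≤ z) (hs : 2 ≤ s) (f : ℝ)
    (hf : ∀ x t : ℝ, 0 ≤ x → 0 ≤ t → x * (1+t)^z ≤ t → f * x^s ≤ t) :
    f ≤ ((z:ℝ) * Real.exp 1)^(s-1) * ((s:ℝ)/((s:ℝ)-1))^(s-1) := by
  have hzR : (1:ℝ) ≤ (z:ℝ) := by exact_mod_cast hz
  have hsR : (2:ℝ) ≤ (s:ℝ) := by exact_mod_cast hs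
  set t0 : ℝ := ((s:ℝ)-1)/((z:ℝ)*s) with ht0def
  have ht0 : 0 < t0 := by
    apply div_pos (by linarith)
    positivity
  have h1t : (0:ℝ) < 1 + t0 := by linarith
  set x0 : ℝ := t0 / (1+t0)^z with hx0def
  have hx0 : 0 < x0 := div_pos ht0 (pow_pos h1t z)
  have hxt : x0 * (1+t0)^z = t0 := by
    rw [hx0def]
    field_simp
  have hfb : f * x0^s ≤ t0 := hf x0 t0 hx0.le ht0.le (le_of_eq hxt)
  have hf2 : f ≤ t0 / x0^s := by
    rw [le_div_iff₀ (pow_pos hx0 s)]; exact hfb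
  have hexp : t0 / x0 ^ s = (1/t0)^(s-1) * ((1+t0)^(z*s)) := by
    have hxs : x0 ^ s = t0^s / ((1+t0)^(z*s)) := by
      rw [hx0def, div_pow, ← pow_mul]
    rw [hxs]
    have hts : t0^s = t0^(s-1) * t0 := by
      rw [← pow_succ]
      congr 1
      omega
    rw [hts]
    have hB : (0:ℝ) < (1+t0)^(z*s) := pow_pos h1t _
    field_simp
    ring
    rw [← mul_pow, mul_inv_cancel₀ ht0.ne', one_pow]
  have hb1 : ((1:ℝ)+t0)^(z*s) ≤ (Real.exp t0)^(z*s) := by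
    apply pow_le_pow_left₀ h1t.le
    have := Real.add_one_le_exp t0
    linarith
  have hb2 : (Real.exp t0)^(z*s) = Real.exp (((z*s : ℕ):ℝ) * t0) := by
    rw [Real.exp_nat_mul]
  have hb3 : ((z*s : ℕ):ℝ) * t0 = (s:ℝ) - 1 := by
    rw [ht0def]
    push_cast
    field_simp
  have hb4 : Real.exp ((s:ℝ)-1) = (Real.exp 1)^(s-1) := by
    rw [← Real.exp_nat_mul]
    congr 1
    have : ((s - 1 : ℕ):ℝ) = (s:ℝ) - 1 := by
      push_cast [Nat.cast_sub (by omega : 1 ≤ s)]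
      ring
    rw [this]; ring
  have hfinal : t0 / x0 ^ s ≤ ((z:ℝ) * Real.exp 1)^(s-1) * ((s:ℝ)/((s:ℝ)-1))^(s-1) := by
    rw [hexp]
    have h1 : (1/t0)^(s-1) * ((1+t0)^(z*s)) ≤ (1/t0)^(s-1) * (Real.exp 1)^(s-1) := by
      apply mul_le_mul_of_nonneg_left _ (by positivity)
      calc ((1:ℝ)+t0)^(z*s) ≤ (Real.exp t0)^(z*s) := hb1
        _ = Real.exp (((z*s : ℕ):ℝ) * t0) := hb2
        _ = Real.exp ((s:ℝ)-1) := by rw [hb3]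
        _ = (Real.exp 1)^(s-1) := hb4
    refine h1.trans (le_of_eq ?_)
    rw [← mul_pow, ← mul_pow]
    congr 1
    rw [ht0def]
    field_simp
  exact hf2.trans hfinal

lemma per_s_bound {z s : ℕ} (hz : 1 ≤ z) (hs : 1 ≤ s) {p : ℝ} (hp0 : 0 < p) (hp1 : p < 1)
    (hthr : 2*(z:ℝ)*Real.exp 1*Real.sqrt p < 1)
    (f : ℝ) (hf0 : 0 ≤ f) (hf1 : s = 1 → f ≤ 1)
    (hf : ∀ x t : ℝ, 0 ≤ x → 0 ≤ t → x * (1+t)^z ≤ t → f * x^s ≤ t) :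
    f * (s.choose ((s+1)/2)) * p^((s+1)/2)
      ≤ (2*(z:ℝ)*Real.exp 1*Real.sqrt p)^s / ((z:ℝ)*Real.exp 1) := by
  have hzR : (1:ℝ) ≤ (z:ℝ) := by exact_mod_cast hz
  have hepos := Real.exp_pos 1
  set q := Real.sqrt p with hqdef
  have hq0 : 0 < q := Real.sqrt_pos.2 hp0
  have hq1 : q < 1 := by
    rw [hqdef]
    rw [show (1:ℝ) = 1^2 by norm_num] at hp1 ⊢
    exact (Real.sqrt_lt' (by norm_num)).2 (by norm_num; linarith)
  have hpq : p = q^2 := (Real.sq_sqrt hp0.le).symm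
  rcases eq_or_lt_of_le hs with hs1 | hs2
  · -- s = 1
    have hs1' : s = 1 := hs1.symm
    subst hs1'
    simp only [Nat.choose_self, Nat.cast_one, pow_one]
    have : (2*(z:ℝ)*Real.exp 1*q)^1 / ((z:ℝ)*Real.exp 1) = 2*q := by
      field_simp
    rw [pow_one] at this ⊢
    rw [this]
    have hf1' : f ≤ 1 := hf1 rfl
    calc f * 1 * p ≤ 1 * 1 * p := by
          apply mul_le_mul_of_nonneg_right _ hp0.le
          simpa using hf1'
      _ = q * q := by rw [hpq]; ring
      _ ≤ 1 * q := by
          apply mul_le_mul_of_nonneg_right hq1.le hq0.le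
      _ ≤ 2 * q := by linarith
  · -- s ≥ 2
    have hs2' : 2 ≤ s := hs2
    have hM := count_bound hz hs2' f hf
    have hcore := core_ineq hs2' hz hq0 hthr
    have hsR : (2:ℝ) ≤ (s:ℝ) := by exact_mod_cast hs2'
    have hph : p ^ ((s+1)/2) = q ^ (2 * ((s+1)/2)) := by
      rw [hpq, ← pow_mul]
    have hchoosepos : (0:ℝ) ≤ (s.choose ((s+1)/2) : ℝ) := by positivity
    have hqpow : (0:ℝ) ≤ q ^ (2 * ((s+1)/2)) := by positivity
    have hcs_pos : (0:ℝ) ≤ ((s:ℝ)/((s:ℝ)-1))^(s-1) := by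
      apply pow_nonneg
      apply div_nonneg <;> linarith
    have step : f * (s.choose ((s+1)/2)) * p^((s+1)/2)
        ≤ ((z:ℝ)*Real.exp 1)^(s-1) * (2^s * q^s) := by
      rw [hph]
      calc f * (s.choose ((s+1)/2)) * q ^ (2*((s+1)/2))
          ≤ (((z:ℝ)*Real.exp 1)^(s-1) * ((s:ℝ)/((s:ℝ)-1))^(s-1)) * (s.choose ((s+1)/2))
              * q ^ (2*((s+1)/2)) := by
            apply mul_le_mul_of_nonneg_right _ hqpow
            exact mul_le_mul_of_nonneg_right hM hchoosepos
        _ = ((z:ℝ)*Real.exp 1)^(s-1)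
              * (((s:ℝ)/((s:ℝ)-1))^(s-1) * (s.choose ((s+1)/2)) * q ^ (2*((s+1)/2))) := by
            ring
        _ ≤ ((z:ℝ)*Real.exp 1)^(s-1) * (2^s * q^s) := by
            apply mul_le_mul_of_nonneg_left hcore (by positivity)
    refine step.trans (le_of_eq ?_)
    have hze : (0:ℝ) < (z:ℝ)*Real.exp 1 := by positivity
    have h1 : (2*(z:ℝ)*Real.exp 1*q)^s = (2*q)^s * ((z:ℝ)*Real.exp 1)^s := by
      rw [← mul_pow]
      congr 1
      ring
    have h2 : ((z:ℝ)*Real.exp 1)^s = ((z:ℝ)*Real.exp 1)^(s-1) * ((z:ℝ)*Real.exp 1) := by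
      rw [← pow_succ]
      congr 1
      omega
    rw [h1, h2]
    rw [mul_pow]
    field_simp
    ring


end ClusterAux

open ClusterAux in
/-- Under local stochastic noise with rate `p` on a graph of maximum degree `z`
on `n` vertices, the probability that some connected cluster of size `s ≥ d`
has at least `⌈s/2⌉` erroneous vertices is at most
`(n/(z e)) (2 z e √p)^d / (1 - 2 z e √p)`, provided `2 z e √p < 1`. -/
theorem cluster_error_probability {V : Type*} [Fintype V] [DecidableEq V]
    (G : SimpleGraph V) [DecidableRel G.Adj] (z : ℕ) (hz : 1 ≤ z)
    (hdeg : ∀ v, G.degree v ≤ z)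
    {Ω : Type*} [MeasurableSpace Ω] (μ : Measure Ω) [IsProbabilityMeasure μ]
    (E : Ω → Finset V) (p : ℝ) (hp0 : 0 < p) (hp1 : p < 1)
    (hls : ∀ A : Finset V, μ {ω | A ⊆ E ω} ≤ ENNReal.ofReal (p ^ A.card))
    (d : ℕ) (hd : 1 ≤ d)
    (hthr : 2 * (z : ℝ) * Real.exp 1 * Real.sqrt p < 1) :
    μ {ω | ∃ T : Finset V, T.Nonempty ∧
        (∀ x ∈ T, ∀ y ∈ T, ∃ w : G.Walk x y, ∀ u ∈ w.support, u ∈ T) ∧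
        d ≤ T.card ∧ (T.card + 1) / 2 ≤ (T.filter (fun v => v ∈ E ω)).card}
      ≤ ENNReal.ofReal ((Fintype.card V : ℝ) / ((z : ℝ) * Real.exp 1) *
          (2 * (z : ℝ) * Real.exp 1 * Real.sqrt p) ^ d /
          (1 - 2 * (z : ℝ) * Real.exp 1 * Real.sqrt p)) := by
  classical
  letI : LinearOrder V := LinearOrder.lift' (Fintype.equivFin V) (Equiv.injective _)
  set e1 : ℝ := Real.exp 1 with he1
  set r : ℝ := 2 * (z : ℝ) * e1 * Real.sqrt p with hr
  have hepos : (0:ℝ) < e1 := Real.exp_pos 1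
  have hzR : (1:ℝ) ≤ (z:ℝ) := by exact_mod_cast hz
  have hr0 : 0 ≤ r := by
    rw [hr]; positivity
  have hr1 : r < 1 := hthr
  have h1r : (0:ℝ) < 1 - r := by linarith
  have hze : (0:ℝ) < (z:ℝ) * e1 := by positivity
  set Nn := Fintype.card V with hNn
  set 𝒯 : Finset (Finset V) :=
    Finset.univ.powerset.filter (fun T => T.Nonempty ∧ ConnIn G T ∧ d ≤ T.card) with h𝒯
  set g : ℕ → ℝ := fun s => (s.choose ((s+1)/2) : ℝ) * p ^ ((s+1)/2) with hg
  have hg0 : ∀ s, 0 ≤ g s := fun s => by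
    rw [hg]; positivity
  -- event inclusion
  have hsub : {ω | ∃ T : Finset V, T.Nonempty ∧
        (∀ x ∈ T, ∀ y ∈ T, ∃ w : G.Walk x y, ∀ u ∈ w.support, u ∈ T) ∧
        d ≤ T.card ∧ (T.card + 1) / 2 ≤ (T.filter (fun v => v ∈ E ω)).card}
      ⊆ ⋃ T ∈ 𝒯, ⋃ S ∈ T.powersetCard ((T.card + 1) / 2), {ω | S ⊆ E ω} := by
    intro ω hω
    obtain ⟨T, hne, hconn, hdc, hcard⟩ := hω
    have hT𝒯 : T ∈ 𝒯 := by
      rw [h𝒯, Finset.mem_filter, Finset.mem_powerset]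
      exact ⟨Finset.subset_univ T, hne, hconn, hdc⟩
    obtain ⟨S, hS, hScard⟩ := Finset.exists_subset_card_eq hcard
    refine Set.mem_iUnion₂.2 ⟨T, hT𝒯, Set.mem_iUnion₂.2 ⟨S, ?_, ?_⟩⟩
    · exact Finset.mem_powersetCard.2 ⟨hS.trans (Finset.filter_subset _ _), hScard⟩
    · intro a haS
      exact (Finset.mem_filter.1 (hS haS)).2
  refine le_trans (measure_mono hsub) ?_
  refine le_trans (measure_biUnion_finset_le _ _) ?_
  refine le_trans (Finset.sum_le_sum (fun T _ => measure_biUnion_finset_le _ _)) ?_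
  refine le_trans (Finset.sum_le_sum (fun T _ =>
    Finset.sum_le_sum (fun S _ => hls S))) ?_
  have hsum1 : ∀ T : Finset V,
      ∑ S ∈ T.powersetCard ((T.card + 1) / 2), ENNReal.ofReal (p ^ S.card)
        = ENNReal.ofReal (g T.card) := by
    intro T
    have : ∀ S ∈ T.powersetCard ((T.card + 1) / 2),
        ENNReal.ofReal (p ^ S.card) = ENNReal.ofReal (p ^ ((T.card + 1) / 2)) := by
      intro S hS
      rw [(Finset.mem_powersetCard.1 hS).2]
    rw [Finset.sum_congr rfl this, Finset.sum_const, Finset.card_powersetCard,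
      nsmul_eq_mul, hg]
    rw [ENNReal.ofReal_mul (by positivity), ENNReal.ofReal_natCast]
  rw [Finset.sum_congr rfl (fun T _ => hsum1 T)]
  rw [← ENNReal.ofReal_sum_of_nonneg (fun T _ => hg0 T.card)]
  refine ENNReal.ofReal_le_ofReal ?_
  -- now a real inequality
  -- step A: localize at vertices
  have stepA : ∑ T ∈ 𝒯, g T.card
      ≤ ∑ v ∈ Finset.univ, ∑ T ∈ 𝒯.filter (fun T => v ∈ T), g T.card := by
    have h1 : ∀ T ∈ 𝒯, g T.card ≤ ∑ v ∈ Finset.univ, if v ∈ T then g T.card else 0 := by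
      intro T hT
      obtain ⟨-, hne, -, -⟩ := Finset.mem_filter.1 hT |>.imp id (fun h => h)
      have : ∑ v ∈ Finset.univ, (if v ∈ T then g T.card else 0)
          = T.card • g T.card := by
        rw [← Finset.sum_filter, Finset.filter_univ_mem, Finset.sum_const]
      rw [this, nsmul_eq_mul]
      have hc1 : (1:ℝ) ≤ T.card := by
        have := Finset.card_pos.2 ((Finset.mem_filter.1 hT).2.1)
        exact_mod_cast this
      nlinarith [hg0 T.card]
    calc ∑ T ∈ 𝒯, g T.card ≤ ∑ T ∈ 𝒯, ∑ v ∈ Finset.univ, (if v ∈ T then g T.card else 0) :=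
          Finset.sum_le_sum h1
      _ = ∑ v ∈ Finset.univ, ∑ T ∈ 𝒯, (if v ∈ T then g T.card else 0) := Finset.sum_comm
      _ = ∑ v ∈ Finset.univ, ∑ T ∈ 𝒯.filter (fun T => v ∈ T), g T.card := by
          exact Finset.sum_congr rfl (fun v _ => (Finset.sum_filter _ _).symm)
  refine stepA.trans ?_
  -- step B : per vertex bound
  have stepB : ∀ v : V, ∑ T ∈ 𝒯.filter (fun T => v ∈ T), g T.card
      ≤ (r ^ d / (1 - r)) / ((z:ℝ) * e1) := by
    intro v
    have hmaps : ∀ T ∈ 𝒯.filter (fun T => v ∈ T), T.card ∈ Finset.Icc d Nn := by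
      intro T hT
      obtain ⟨hT𝒯, -⟩ := Finset.mem_filter.1 hT
      obtain ⟨-, -, -, hdc⟩ := Finset.mem_filter.1 hT𝒯 |>.imp id (fun h => h)
      refine Finset.mem_Icc.2 ⟨(Finset.mem_filter.1 hT𝒯).2.2.2, ?_⟩
      rw [hNn, ← Finset.card_univ]
      exact Finset.card_le_univ T
    rw [← Finset.sum_fiberwise_of_maps_to hmaps]
    have hinner : ∀ s ∈ Finset.Icc d Nn,
        ∑ T ∈ (𝒯.filter (fun T => v ∈ T)).filter (fun T => T.card = s), g T.card
          ≤ r ^ s / ((z:ℝ) * e1) := by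
      intro s hs
      have hs1 : 1 ≤ s := le_trans hd (Finset.mem_Icc.1 hs).1
      have heq : ∑ T ∈ (𝒯.filter (fun T => v ∈ T)).filter (fun T => T.card = s), g T.card
          = (((𝒯.filter (fun T => v ∈ T)).filter (fun T => T.card = s)).card : ℝ) * g s := by
        rw [Finset.sum_congr rfl (fun T hT => by rw [(Finset.mem_filter.1 hT).2]),
          Finset.sum_const, nsmul_eq_mul]
      rw [heq]
      set fvs := ((connSets G Finset.univ v).filter (fun T => T.card = s)).card with hfvs
      have hcount : ((𝒯.filter (fun T => v ∈ T)).filter (fun T => T.card = s)).card ≤ fvs := by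
        refine Finset.card_le_card (fun T hT => ?_)
        obtain ⟨hT1, hT2⟩ := Finset.mem_filter.1 hT
        obtain ⟨hT3, hT4⟩ := Finset.mem_filter.1 hT1
        obtain ⟨hT5, -, hconn, -⟩ := Finset.mem_filter.1 hT3 |>.imp Finset.mem_powerset.1
          (fun h => h)
        exact Finset.mem_filter.2 ⟨(mem_connSets G).2 ⟨hT5, hT4, hconn⟩, hT2⟩
      have hper := per_s_bound (z := z) (s := s) hz hs1 hp0 hp1 hthr (fvs : ℝ)
        (by positivity)
        (fun hs1' => by
          subst hs1'
          exact_mod_cast count_one_le (G := G) v)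
        (fun x t hx ht hxt => count_mul_le hdeg v s x t hx ht hxt)
      calc (((𝒯.filter (fun T => v ∈ T)).filter (fun T => T.card = s)).card : ℝ) * g s
          ≤ (fvs : ℝ) * g s := by
            apply mul_le_mul_of_nonneg_right _ (hg0 s)
            exact_mod_cast hcount
        _ = (fvs : ℝ) * (s.choose ((s+1)/2) : ℝ) * p ^ ((s+1)/2) := by rw [hg]; ring
        _ ≤ (2*(z:ℝ)*e1*Real.sqrt p)^s / ((z:ℝ)*e1) := hper
        _ = r ^ s / ((z:ℝ) * e1) := by rw [hr]
    calc ∑ s ∈ Finset.Icc d Nn,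
          ∑ T ∈ (𝒯.filter (fun T => v ∈ T)).filter (fun T => T.card = s), g T.card
        ≤ ∑ s ∈ Finset.Icc d Nn, r ^ s / ((z:ℝ) * e1) := Finset.sum_le_sum hinner
      _ = (∑ s ∈ Finset.Icc d Nn, r ^ s) / ((z:ℝ) * e1) := by rw [Finset.sum_div]
      _ ≤ (r ^ d / (1 - r)) / ((z:ℝ) * e1) := by
          gcongr
          exact geom_tail hr0 hr1 d Nn
  calc ∑ v ∈ Finset.univ, ∑ T ∈ 𝒯.filter (fun T => v ∈ T), g T.card
      ≤ ∑ _v ∈ (Finset.univ : Finset V), (r ^ d / (1 - r)) / ((z:ℝ) * e1) :=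
        Finset.sum_le_sum (fun v _ => stepB v)
    _ = (Nn : ℝ) * ((r ^ d / (1 - r)) / ((z:ℝ) * e1)) := by
        rw [Finset.sum_const, nsmul_eq_mul, Finset.card_univ, hNn]
    _ = (Nn : ℝ) / ((z:ℝ) * e1) * r ^ d / (1 - r) := by
        simp only [div_eq_mul_inv]
        ring
end

section
/- For a fixed vertex v in a graph on n vertices with maximum degree z, and a local stochastic error model with rate p, the probability that some connected cluster S of size s ≥ d containing v has at least ⌈s/2⌉ erroneous vertices is at most Σ_{s ≥ d} (z·e)^{s−1} · 2^s · p^{s/2}, which converges when 2·z·e·√p < 1. -/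
open MeasureTheory


open Finset

set_option linter.unusedSectionVars false

section Count

variable {V : Type*} [Fintype V] [DecidableEq V] (G : SimpleGraph V) [DecidableRel G.Adj]
  (z : ℕ) (v : V)

/-- fixed list of neighbours of a vertex -/
noncomputable def nbrs (u : V) : List V := (G.neighborFinset u).toList

lemma mem_nbrs {u w : V} : w ∈ nbrs G u ↔ G.Adj u w := by
  rw [nbrs, Finset.mem_toList, SimpleGraph.mem_neighborFinset]

lemma length_nbrs (u : V) : (nbrs G u).length = G.degree u := by
  simp [nbrs]

/-- decode a slot number into a vertex -/
noncomputable def slotD (acc : List V) (m : ℕ) : V :=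
  (nbrs G (acc.getD (m / z) v)).getD (m % z) v

/-- available slots from `acc` into `T \ acc` -/
noncomputable def slotSet (T : Finset V) (acc : List V) : Finset ℕ :=
  ((Finset.range acc.length ×ˢ T).filter
    (fun pr => pr.2 ∉ acc ∧ G.Adj (acc.getD pr.1 v) pr.2)).image
    (fun pr => pr.1 * z + (nbrs G (acc.getD pr.1 v)).idxOf pr.2)

variable (hz : 1 ≤ z) (hdeg : ∀ u, G.degree u ≤ z)

include hz hdeg in
lemma slot_decode {T : Finset V} {acc : List V} {m : ℕ} (hm : m ∈ slotSet G z v T acc) :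
    slotD G z v acc m ∈ T ∧ slotD G z v acc m ∉ acc ∧ m < acc.length * z ∧
      G.Adj (acc.getD (m / z) v) (slotD G z v acc m) := by
  simp only [slotSet, Finset.mem_image, Finset.mem_filter, Finset.mem_product,
    Finset.mem_range] at hm
  obtain ⟨⟨j, w⟩, ⟨⟨hj, hw⟩, hwacc, hadj⟩, rfl⟩ := hm
  simp only at hj hw hwacc hadj ⊢
  have hwn : w ∈ nbrs G (acc.getD j v) := (mem_nbrs G).2 hadj
  have hidx : (nbrs G (acc.getD j v)).idxOf w < (nbrs G (acc.getD j v)).length :=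
    List.idxOf_lt_length_iff.2 hwn
  have hidxz : (nbrs G (acc.getD j v)).idxOf w < z := by
    calc _ < (nbrs G (acc.getD j v)).length := hidx
    _ ≤ z := by rw [length_nbrs]; exact hdeg _
  have hdiv : (j * z + (nbrs G (acc.getD j v)).idxOf w) / z = j := by
    rw [Nat.mul_comm, Nat.mul_add_div (by omega), Nat.div_eq_of_lt hidxz]; omega
  have hmod : (j * z + (nbrs G (acc.getD j v)).idxOf w) % z = (nbrs G (acc.getD j v)).idxOf w := by
    rw [Nat.mul_comm, Nat.mul_add_mod, Nat.mod_eq_of_lt hidxz]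
  have hdec : slotD G z v acc (j * z + (nbrs G (acc.getD j v)).idxOf w) = w := by
    rw [slotD, hdiv, hmod, List.getD_eq_getElem _ _ hidx]
    exact List.getElem_idxOf hidx
  refine ⟨by rw [hdec]; exact hw, by rw [hdec]; exact hwacc, ?_, by rw [hdiv, hdec]; exact hadj⟩
  have : j * z + (nbrs G (acc.getD j v)).idxOf w < (j+1) * z := by
    rw [Nat.add_mul, Nat.one_mul]; omega
  calc _ < (j+1)*z := this
  _ ≤ acc.length * z := Nat.mul_le_mul_right _ (by omega)

end Count

section More
variable {V : Type*} [Fintype V] [DecidableEq V] {G : SimpleGraph V} [DecidableRel G.Adj]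
  {z : ℕ} {v : V}

lemma crossing {T : Finset V} {acc : List V} :
    ∀ {x y : V} (w : G.Walk x y), x ∈ acc → y ∉ acc → (∀ u ∈ w.support, u ∈ T) →
      ∃ a b, a ∈ acc ∧ b ∈ T ∧ b ∉ acc ∧ G.Adj a b := by
  intro x y w
  induction w with
  | nil => intro hx hy _; exact absurd hx hy
  | @cons x' u' y' h q ih =>
    intro hx hy hsup
    by_cases hu : u' ∈ acc
    · exact ih hu hy (fun t ht => hsup t (by simp [SimpleGraph.Walk.support_cons, ht]))
    · exact ⟨x', u', hx, hsup u' (by simp [SimpleGraph.Walk.support_cons]), hu, h⟩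

lemma slotSet_nonempty {T : Finset V} {acc : List V}
    (hconn : ∀ x ∈ T, ∀ y ∈ T, ∃ w : G.Walk x y, ∀ u ∈ w.support, u ∈ T)
    (hv : v ∈ acc) (hvT : v ∈ T) (haccT : ∀ u ∈ acc, u ∈ T)
    {w : V} (hw : w ∈ T) (hwacc : w ∉ acc) :
    (slotSet G z v T acc).Nonempty := by
  obtain ⟨walk, hsup⟩ := hconn v hvT w hw
  obtain ⟨a, b, ha, hb, hbacc, hadj⟩ := crossing walk hv hwacc hsup
  have hj : acc.idxOf a < acc.length := List.idxOf_lt_length_iff.2 ha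
  have hga : acc.getD (acc.idxOf a) v = a := by
    rw [List.getD_eq_getElem _ _ hj]; exact List.getElem_idxOf hj
  refine ⟨acc.idxOf a * z + (nbrs G a).idxOf b, ?_⟩
  simp only [slotSet, Finset.mem_image, Finset.mem_filter, Finset.mem_product, Finset.mem_range]
  exact ⟨(acc.idxOf a, b), ⟨⟨hj, hb⟩, hbacc, by rw [hga]; exact hadj⟩, by rw [hga]⟩

/-- the exploration process: returns (discovered vertices, slots used) -/
noncomputable def explore (G : SimpleGraph V) [DecidableRel G.Adj] (z : ℕ) (v : V)
    (T : Finset V) : ℕ → List V × List ℕ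
  | 0 => ([v], [])
  | (i+1) =>
    let p := explore G z v T i
    if h : (slotSet G z v T p.1).Nonempty then
      (p.1 ++ [slotD G z v p.1 ((slotSet G z v T p.1).min' h)],
       p.2 ++ [(slotSet G z v T p.1).min' h])
    else p

end More

section Helpers
variable {V : Type*} [Fintype V] [DecidableEq V] {G : SimpleGraph V} [DecidableRel G.Adj]
  {z : ℕ} {v : V} {T : Finset V}

lemma slotD_append {acc l : List V} {m : ℕ} (h : m / z < acc.length) :
    slotD G z v (acc ++ l) m = slotD G z v acc m := by
  rw [slotD, slotD, List.getD_append _ _ _ _ h]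

lemma slotSet_append {acc : List V} {w : V} {m : ℕ}
    (hm : m ∈ slotSet G z v T (acc ++ [w])) :
    m ∈ slotSet G z v T acc ∨ acc.length * z ≤ m := by
  simp only [slotSet, Finset.mem_image, Finset.mem_filter, Finset.mem_product,
    Finset.mem_range] at hm ⊢
  obtain ⟨⟨j, u⟩, ⟨⟨hj, hu⟩, huacc, hadj⟩, rfl⟩ := hm
  simp only at hj hu huacc hadj ⊢
  by_cases hjl : j < acc.length
  · left
    have hg : (acc ++ [w]).getD j v = acc.getD j v := List.getD_append _ _ _ _ hjl
    refine ⟨(j, u), ⟨⟨hjl, hu⟩, fun hc => huacc (by simp [hc]), by rw [← hg]; exact hadj⟩, ?_⟩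
    simp only [hg]
  · right
    have : acc.length ≤ j := by omega
    calc acc.length * z ≤ j * z := Nat.mul_le_mul_right _ this
    _ ≤ _ := Nat.le_add_right _ _

end Helpers


section Invariant
variable {V : Type*} [Fintype V] [DecidableEq V] {G : SimpleGraph V} [DecidableRel G.Adj]
  {z : ℕ} {v : V} {T : Finset V}

lemma explore_invariant (hz : 1 ≤ z) (hdeg : ∀ u, G.degree u ≤ z)
    (hconn : ∀ x ∈ T, ∀ y ∈ T, ∃ w : G.Walk x y, ∀ u ∈ w.support, u ∈ T)
    (hvT : v ∈ T) :
    ∀ i, i + 1 ≤ T.card →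
      (explore G z v T i).1.length = i + 1 ∧
      (explore G z v T i).1.Nodup ∧
      (∀ u ∈ (explore G z v T i).1, u ∈ T) ∧
      v ∈ (explore G z v T i).1 ∧
      (explore G z v T i).2.foldl (fun a m => a ++ [slotD G z v a m]) [v] =
        (explore G z v T i).1 ∧
      (∀ m ∈ (explore G z v T i).2, m < (explore G z v T i).1.length * z) ∧
      (∀ m' ∈ slotSet G z v T (explore G z v T i).1, ∀ m ∈ (explore G z v T i).2, m < m') ∧
      List.Pairwise (· < ·) (explore G z v T i).2 ∧
      (explore G z v T i).2.length = i := by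
  intro i
  induction i with
  | zero =>
    intro _
    refine ⟨rfl, by simp [explore], by simpa [explore] using hvT, by simp [explore],
      rfl, by simp [explore], by simp [explore], by simp [explore], rfl⟩
  | succ i ih =>
    intro hi1
    obtain ⟨hlen, hnd, hsub, hvacc, hfold, hbound, hfuture, hpw, hmslen⟩ := ih (by omega)
    set acc := (explore G z v T i).1 with hacc
    set ms := (explore G z v T i).2 with hms
    -- there is an unexplored vertex
    have hssub : acc.toFinset ⊂ T := by
      refine Finset.ssubset_iff_subset_ne.2 ⟨fun u hu => hsub u (List.mem_toFinset.1 hu), fun h => ?_⟩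
      have hc : acc.toFinset.card = i + 1 := by rw [List.toFinset_card_of_nodup hnd, hlen]
      rw [h] at hc; omega
    obtain ⟨w0, hw0T, hw0acc⟩ := Finset.exists_of_ssubset hssub
    have hne : (slotSet G z v T acc).Nonempty :=
      slotSet_nonempty hconn hvacc hvT hsub hw0T (by simpa using hw0acc)
    have hexp : explore G z v T (i+1) =
        (acc ++ [slotD G z v acc ((slotSet G z v T acc).min' hne)],
         ms ++ [(slotSet G z v T acc).min' hne]) := by
      rw [explore]
      simp only [← hacc, ← hms, dif_pos hne]
    set mi := (slotSet G z v T acc).min' hne with hmi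
    have hmem : mi ∈ slotSet G z v T acc := Finset.min'_mem _ hne
    obtain ⟨hwT, hwacc, hmlt, hadjm⟩ := slot_decode G z v hz hdeg hmem
    set w := slotD G z v acc mi with hw
    rw [hexp]
    simp only
    have hdivlt : ∀ {m : ℕ}, m < acc.length * z → m / z < acc.length := by
      intro m hm'
      exact Nat.div_lt_of_lt_mul (by rw [Nat.mul_comm]; exact hm')
    have hlenle : acc.length * z ≤ (acc ++ [w]).length * z :=
      Nat.mul_le_mul_right _ (by simp)
    refine ⟨by simp [hlen], ?_, ?_, by simp [hvacc], ?_, ?_, ?_, ?_, by simp [hmslen]⟩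
    · rw [List.nodup_append]
      exact ⟨hnd, List.nodup_singleton _, by simpa using fun (a : V) (ha : a ∈ acc) (h : a = w) => hwacc (h ▸ ha)⟩
    · intro u hu
      rcases List.mem_append.1 hu with h | h
      · exact hsub u h
      · rw [List.mem_singleton] at h
        rw [h]; exact hwT
    · rw [List.foldl_append, hfold]
      rfl
    · intro m hm'
      rcases List.mem_append.1 hm' with h | h
      · exact lt_of_lt_of_le (hbound m h) hlenle
      · rw [List.mem_singleton] at h
        rw [h]; exact lt_of_lt_of_le hmlt hlenle
    · -- future slots are larger
      intro m'' hm'' m hm'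
      have hcases := slotSet_append hm''
      rcases List.mem_append.1 hm' with h | h
      · rcases hcases with hc | hc
        · exact hfuture m'' hc m h
        · exact lt_of_lt_of_le (hbound m h) hc
      · rw [List.mem_singleton] at h
        rcases hcases with hc | hc
        · have hle : mi ≤ m'' := Finset.min'_le _ _ hc
          rcases Nat.lt_or_ge m m'' with h' | h'
          · exact h'
          · exfalso
            have hmeq : mi = m'' := by omega
            obtain ⟨_, hnotin, _, _⟩ := slot_decode G z v hz hdeg hm''
            have hdl : m'' / z < acc.length := hdivlt (slot_decode G z v hz hdeg hc).2.2.1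
            rw [slotD_append hdl] at hnotin
            refine hnotin ?_
            rw [List.mem_append, List.mem_singleton]
            right
            rw [← hmeq, ← hw]
        · have := hmlt; omega
    · rw [List.pairwise_append]
      refine ⟨hpw, List.pairwise_singleton _ _, fun a ha b hb => ?_⟩
      rw [List.mem_singleton] at hb
      rw [hb]
      exact hfuture mi hmem a ha

end Invariant

section CountFinal
variable {V : Type*} [Fintype V] [DecidableEq V] {G : SimpleGraph V} [DecidableRel G.Adj]
  {z : ℕ} {v : V}

lemma explore_recover (hz : 1 ≤ z) (hdeg : ∀ u, G.degree u ≤ z) {T : Finset V}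
    (hconn : ∀ x ∈ T, ∀ y ∈ T, ∃ w : G.Walk x y, ∀ u ∈ w.support, u ∈ T)
    (hvT : v ∈ T) (hs : 1 ≤ T.card) :
    ((explore G z v T (T.card - 1)).2.toFinset ∈
      (Finset.range (T.card * z)).powersetCard (T.card - 1)) ∧
    T = ((Finset.sort (explore G z v T (T.card - 1)).2.toFinset (· ≤ ·)).foldl
          (fun a m => a ++ [slotD G z v a m]) [v]).toFinset := by
  obtain ⟨hlen, hnd, hsub, hvacc, hfold, hbound, _, hpw, hmslen⟩ :=
    explore_invariant hz hdeg hconn hvT (T.card - 1) (by omega)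
  set acc := (explore G z v T (T.card - 1)).1
  set ms := (explore G z v T (T.card - 1)).2
  have hacclen : acc.length = T.card := by omega
  have hmsnd : ms.Nodup := hpw.imp ne_of_lt
  have hsort : Finset.sort ms.toFinset (· ≤ ·) = ms := by
    refine List.Perm.eq_of_pairwise' (Finset.pairwise_sort _ _) ?_
      (List.perm_of_nodup_nodup_toFinset_eq (Finset.sort_nodup _ _) hmsnd
        (by rw [Finset.sort_toFinset]))
    exact List.Pairwise.imp le_of_lt hpw
  have haccT : acc.toFinset = T := by
    refine Finset.eq_of_subset_of_card_le (fun u hu => hsub u (List.mem_toFinset.1 hu)) ?_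
    rw [List.toFinset_card_of_nodup hnd, hacclen]
  constructor
  · rw [Finset.mem_powersetCard]
    refine ⟨fun m hm => ?_, ?_⟩
    · rw [List.mem_toFinset] at hm
      rw [Finset.mem_range]
      have := hbound m hm
      rwa [hacclen] at this
    · rw [List.toFinset_card_of_nodup hmsnd, hmslen]
  · rw [hsort, hfold, haccT]

attribute [local instance] Classical.propDecidable

lemma cluster_count (hz : 1 ≤ z) (hdeg : ∀ u, G.degree u ≤ z) (s : ℕ) (hs : 1 ≤ s) :
    (Finset.univ.filter (fun T : Finset V => v ∈ T ∧
      (∀ x ∈ T, ∀ y ∈ T, ∃ w : G.Walk x y, ∀ u ∈ w.support, u ∈ T) ∧ T.card = s)).card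
      ≤ (s * z).choose (s - 1) := by
  classical
  have h := Finset.card_le_card_of_injOn
    (fun T => (explore G z v T (s - 1)).2.toFinset)
    (s := (Finset.univ.filter (fun T : Finset V => v ∈ T ∧
      (∀ x ∈ T, ∀ y ∈ T, ∃ w : G.Walk x y, ∀ u ∈ w.support, u ∈ T) ∧ T.card = s)))
    (t := (Finset.range (s * z)).powersetCard (s - 1)) ?_ ?_
  · calc _ ≤ ((Finset.range (s * z)).powersetCard (s - 1)).card := h
    _ = (s * z).choose (s - 1) := by rw [Finset.card_powersetCard, Finset.card_range]
  · intro T hT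
    rw [Finset.mem_coe, Finset.mem_filter] at hT
    rw [Finset.mem_coe]
    obtain ⟨_, hvT, hconn, hcard⟩ := hT
    have := (explore_recover hz hdeg hconn hvT (by omega)).1
    rwa [hcard] at this
  · intro T1 h1 T2 h2 heq
    simp only [Finset.coe_filter, Set.mem_setOf_eq] at h1 h2
    obtain ⟨_, hvT1, hconn1, hcard1⟩ := h1
    obtain ⟨_, hvT2, hconn2, hcard2⟩ := h2
    have r1 := (explore_recover hz hdeg hconn1 hvT1 (by omega)).2
    have r2 := (explore_recover hz hdeg hconn2 hvT2 (by omega)).2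
    rw [hcard1] at r1
    rw [hcard2] at r2
    simp only at heq
    rw [r1, r2, heq]

end CountFinal

section Analysis

lemma pow_le_exp_factorial : ∀ n : ℕ, ((n + 1 : ℕ) : ℝ) ^ n ≤ Real.exp 1 ^ n * (Nat.factorial n) := by
  intro n
  induction n with
  | zero => simp
  | succ n ih =>
    have hpos : (0:ℝ) < (n:ℝ) + 1 := by positivity
    have key : ((n + 2 : ℕ) : ℝ) ^ (n+1) ≤ Real.exp 1 * ((n:ℝ)+1) * ((n+1:ℕ):ℝ) ^ n := by
      have h1 : ((n + 2 : ℕ) : ℝ) = ((n:ℝ)+1) * (1 + 1/((n:ℝ)+1)) := by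
        push_cast
        field_simp
        ring
      rw [h1, mul_pow]
      have h2 : (1 + 1/((n:ℝ)+1)) ^ (n+1) ≤ Real.exp 1 := by
        have h3 : (1 + 1/((n:ℝ)+1)) ≤ Real.exp (1/((n:ℝ)+1)) := by
          have := Real.add_one_le_exp (1/((n:ℝ)+1))
          linarith
        calc (1 + 1/((n:ℝ)+1)) ^ (n+1) ≤ Real.exp (1/((n:ℝ)+1)) ^ (n+1) := by
              apply pow_le_pow_left₀ (by positivity) h3
        _ = Real.exp (((n:ℕ)+1) * (1/((n:ℝ)+1))) := by
              rw [← Real.exp_nat_mul]; norm_num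
        _ = Real.exp 1 := by
              congr 1
              field_simp
      calc ((n:ℝ)+1) ^ (n+1) * (1 + 1/((n:ℝ)+1)) ^ (n+1)
          ≤ ((n:ℝ)+1) ^ (n+1) * Real.exp 1 := by
            apply mul_le_mul_of_nonneg_left h2 (by positivity)
      _ = Real.exp 1 * ((n:ℝ)+1) * ((n+1:ℕ):ℝ) ^ n := by
            push_cast; ring
    calc ((n + 1 + 1 : ℕ) : ℝ) ^ (n+1) = ((n + 2 : ℕ) : ℝ) ^ (n+1) := by push_cast; ring
    _ ≤ Real.exp 1 * ((n:ℝ)+1) * ((n+1:ℕ):ℝ) ^ n := key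
    _ ≤ Real.exp 1 * ((n:ℝ)+1) * (Real.exp 1 ^ n * (Nat.factorial n)) := by
          apply mul_le_mul_of_nonneg_left ih (by positivity)
    _ = Real.exp 1 ^ (n+1) * (((n:ℝ)+1) * (Nat.factorial n)) := by ring
    _ = Real.exp 1 ^ (n+1) * (Nat.factorial (n+1)) := by
          rw [Nat.factorial_succ]; push_cast; ring

lemma choose_le_ze_pow (z s : ℕ) (hs : 1 ≤ s) :
    (((s * z).choose (s - 1) : ℕ) : ℝ) ≤ ((z : ℝ) * Real.exp 1) ^ (s - 1) := by
  have hfac : (Nat.factorial (s-1)) * ((s * z).choose (s - 1)) ≤ (s * z) ^ (s - 1) := by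
    calc _ = (s*z).descFactorial (s-1) := ((s*z).descFactorial_eq_factorial_mul_choose (s-1)).symm
    _ ≤ _ := Nat.descFactorial_le_pow _ _
  have hfacR : ((Nat.factorial (s-1)) : ℝ) * (((s * z).choose (s - 1)) : ℝ) ≤ ((s*z:ℕ) : ℝ) ^ (s - 1) := by
    exact_mod_cast hfac
  have hfpos : (0:ℝ) < (Nat.factorial (s-1) : ℝ) := by exact_mod_cast Nat.factorial_pos _
  have hsz : ((s*z:ℕ) : ℝ) ^ (s-1) = ((s:ℕ):ℝ)^(s-1) * ((z:ℕ):ℝ)^(s-1) := by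
    push_cast; rw [mul_pow]
  have hspow : ((s:ℕ):ℝ)^(s-1) ≤ Real.exp 1 ^ (s-1) * (Nat.factorial (s-1)) := by
    have := pow_le_exp_factorial (s-1)
    have hs1 : s - 1 + 1 = s := by omega
    rwa [hs1] at this
  have : (((s * z).choose (s - 1) : ℕ) : ℝ) ≤ ((s*z:ℕ) : ℝ) ^ (s - 1) / (Nat.factorial (s-1)) := by
    rw [le_div_iff₀ hfpos]
    linarith [hfacR]
  calc (((s * z).choose (s - 1) : ℕ) : ℝ) ≤ ((s*z:ℕ) : ℝ) ^ (s - 1) / (Nat.factorial (s-1)) := this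
  _ ≤ ((z : ℝ) * Real.exp 1) ^ (s - 1) := by
      rw [div_le_iff₀ hfpos, hsz, mul_pow]
      calc ((s:ℕ):ℝ)^(s-1) * ((z:ℕ):ℝ)^(s-1)
          = ((z:ℕ):ℝ)^(s-1) * ((s:ℕ):ℝ)^(s-1) := by ring
      _ ≤ ((z:ℕ):ℝ)^(s-1) * (Real.exp 1 ^ (s-1) * (Nat.factorial (s-1))) := by
            apply mul_le_mul_of_nonneg_left hspow (by positivity)
      _ = (z:ℝ)^(s-1) * Real.exp 1 ^ (s-1) * (Nat.factorial (s-1)) := by push_cast; ring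

end Analysis

lemma choose_le_two_pow' (s j : ℕ) : s.choose j ≤ 2 ^ s := by
  rcases le_or_gt j s with h | h
  · calc s.choose j ≤ ∑ m ∈ Finset.range (s+1), s.choose m :=
        Finset.single_le_sum (fun i _ => Nat.zero_le _) (Finset.mem_range.2 (by omega))
    _ = 2 ^ s := Nat.sum_range_choose s
  · rw [Nat.choose_eq_zero_of_lt h]; exact Nat.zero_le _

open MeasureTheory


/-- For a fixed vertex `v` in a graph of maximum degree `z` with local
stochastic noise at rate `p`, the probability that some connected cluster of
size `s ≥ d` containing `v` has at least `⌈s/2⌉` erroneous vertices is at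
most `∑_{s ≥ d} (z e)^(s-1) 2^s p^(s/2)`, and this series converges when
`2 z e √p < 1`. -/
theorem cluster_error_probability_at_vertex {V : Type*} [Fintype V] [DecidableEq V]
    (G : SimpleGraph V) [DecidableRel G.Adj] (z : ℕ) (hz : 1 ≤ z)
    (hdeg : ∀ u, G.degree u ≤ z) (v : V)
    {Ω : Type*} [MeasurableSpace Ω] (μ : Measure Ω) [IsProbabilityMeasure μ]
    (E : Ω → Finset V) (p : ℝ) (hp0 : 0 < p) (hp1 : p < 1)
    (hls : ∀ A : Finset V, μ {ω | A ⊆ E ω} ≤ ENNReal.ofReal (p ^ A.card))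
    (d : ℕ) (hd : 1 ≤ d)
    (hthr : 2 * (z : ℝ) * Real.exp 1 * Real.sqrt p < 1) :
    μ {ω | ∃ T : Finset V, v ∈ T ∧
        (∀ x ∈ T, ∀ y ∈ T, ∃ w : G.Walk x y, ∀ u ∈ w.support, u ∈ T) ∧
        d ≤ T.card ∧ (T.card + 1) / 2 ≤ (T.filter (fun u => u ∈ E ω)).card}
      ≤ ENNReal.ofReal (∑' s : ℕ,
          if d ≤ s then ((z : ℝ) * Real.exp 1) ^ (s - 1) * 2 ^ s * Real.sqrt p ^ s
          else 0) ∧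
    Summable (fun s : ℕ =>
        if d ≤ s then ((z : ℝ) * Real.exp 1) ^ (s - 1) * 2 ^ s * Real.sqrt p ^ s
        else 0) := by

  classical
  set e1 := Real.exp 1 with he1
  have he1pos : 0 < e1 := Real.exp_pos 1
  set sp := Real.sqrt p with hsp
  have hsp0 : 0 < sp := Real.sqrt_pos.2 hp0
  have hsp1 : sp < 1 := by
    rw [hsp, show (1:ℝ) = Real.sqrt 1 by rw [Real.sqrt_one]]
    exact Real.sqrt_lt_sqrt (le_of_lt hp0) hp1
  have hzepos : (0:ℝ) < (z:ℝ) * e1 := by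
    have : (0:ℝ) < (z:ℝ) := by exact_mod_cast hz
    positivity
  set term : ℕ → ℝ := fun s =>
    if d ≤ s then ((z : ℝ) * e1) ^ (s - 1) * 2 ^ s * sp ^ s else 0 with hterm
  have hterm_nonneg : ∀ s, 0 ≤ term s := by
    intro s
    rw [hterm]
    dsimp only
    split
    · positivity
    · exact le_refl 0
  -- summability
  set q : ℝ := 2 * (z:ℝ) * e1 * sp with hq
  have hq0 : 0 ≤ q := by positivity
  have hterm_le : ∀ s, term s ≤ ((z:ℝ) * e1)⁻¹ * q ^ s := by
    intro s
    rw [hterm]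
    dsimp only
    split
    · rename_i hds
      have hs1 : 1 ≤ s := le_trans hd hds
      have : ((z:ℝ) * e1) ^ (s - 1) = ((z:ℝ) * e1) ^ s * ((z:ℝ) * e1)⁻¹ := by
        rw [← pow_sub_one_mul (by omega : s ≠ 0) ((z:ℝ)*e1), mul_assoc,
          mul_inv_cancel₀ (ne_of_gt hzepos), mul_one]
      rw [this, hq]
      have hqpow : q ^ s = 2^s * ((z:ℝ)*e1)^s * sp^s := by
        rw [hq, show 2 * (z:ℝ) * e1 * sp = 2 * ((z:ℝ)*e1) * sp by ring, mul_pow, mul_pow]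
      rw [hqpow]
      exact le_of_eq (by ring)
    · positivity
  have hsummable : Summable term := by
    refine Summable.of_nonneg_of_le hterm_nonneg hterm_le ?_
    exact (summable_geometric_of_lt_one hq0 hthr).mul_left _
  refine ⟨?_, hsummable⟩
  set k : ℕ → ℕ := fun s => (s + 1) / 2 with hk
  set 𝒞 : Finset (Finset V) := Finset.univ.filter (fun T : Finset V => v ∈ T ∧
    (∀ x ∈ T, ∀ y ∈ T, ∃ w : G.Walk x y, ∀ u ∈ w.support, u ∈ T) ∧ d ≤ T.card) with hC
  have hsubset : {ω | ∃ T : Finset V, v ∈ T ∧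
        (∀ x ∈ T, ∀ y ∈ T, ∃ w : G.Walk x y, ∀ u ∈ w.support, u ∈ T) ∧
        d ≤ T.card ∧ (T.card + 1) / 2 ≤ (T.filter (fun u => u ∈ E ω)).card}
      ⊆ ⋃ T ∈ 𝒞, ⋃ A ∈ T.powersetCard (k T.card), {ω | A ⊆ E ω} := by
    intro ω hω
    obtain ⟨T, hvT, hconn, hdT, hcount⟩ := hω
    obtain ⟨A, hAsub, hAcard⟩ := Finset.exists_subset_card_eq hcount
    refine Set.mem_iUnion₂.2 ⟨T, ?_, Set.mem_iUnion₂.2 ⟨A, ?_, ?_⟩⟩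
    · rw [hC, Finset.mem_filter]
      exact ⟨Finset.mem_univ _, hvT, hconn, hdT⟩
    · rw [Finset.mem_powersetCard]
      exact ⟨hAsub.trans (Finset.filter_subset _ _), hAcard⟩
    · intro x hx
      exact (Finset.mem_filter.1 (hAsub hx)).2
  have hf_nonneg : ∀ s : ℕ, (0:ℝ) ≤ (s.choose (k s) : ℝ) * p ^ (k s) := by
    intro s; positivity
  calc μ {ω | ∃ T : Finset V, v ∈ T ∧
        (∀ x ∈ T, ∀ y ∈ T, ∃ w : G.Walk x y, ∀ u ∈ w.support, u ∈ T) ∧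
        d ≤ T.card ∧ (T.card + 1) / 2 ≤ (T.filter (fun u => u ∈ E ω)).card}
      ≤ μ (⋃ T ∈ 𝒞, ⋃ A ∈ T.powersetCard (k T.card), {ω | A ⊆ E ω}) := measure_mono hsubset
  _ ≤ ∑ T ∈ 𝒞, μ (⋃ A ∈ T.powersetCard (k T.card), {ω | A ⊆ E ω}) :=
      measure_biUnion_finset_le _ _
  _ ≤ ∑ T ∈ 𝒞, ENNReal.ofReal ((T.card.choose (k T.card) : ℝ) * p ^ (k T.card)) := by
      refine Finset.sum_le_sum (fun T _ => ?_)
      calc μ (⋃ A ∈ T.powersetCard (k T.card), {ω | A ⊆ E ω})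
          ≤ ∑ A ∈ T.powersetCard (k T.card), μ {ω | A ⊆ E ω} :=
            measure_biUnion_finset_le _ _
      _ ≤ ∑ A ∈ T.powersetCard (k T.card), ENNReal.ofReal (p ^ (k T.card)) := by
            refine Finset.sum_le_sum (fun A hA => ?_)
            have hcard : A.card = k T.card := (Finset.mem_powersetCard.1 hA).2
            have := hls A
            rwa [hcard] at this
      _ = (T.card.choose (k T.card)) • ENNReal.ofReal (p ^ (k T.card)) := by
            rw [Finset.sum_const, Finset.card_powersetCard]
      _ = ENNReal.ofReal ((T.card.choose (k T.card) : ℝ) * p ^ (k T.card)) := by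
            rw [ENNReal.ofReal_mul (by positivity), nsmul_eq_mul, ENNReal.ofReal_natCast]
  _ = ENNReal.ofReal (∑ T ∈ 𝒞, (T.card.choose (k T.card) : ℝ) * p ^ (k T.card)) :=
      (ENNReal.ofReal_sum_of_nonneg (fun T _ => hf_nonneg T.card)).symm
  _ ≤ ENNReal.ofReal (∑' s : ℕ, term s) := by
      refine ENNReal.ofReal_le_ofReal ?_
      have hcomp := Finset.sum_comp (fun s : ℕ => (s.choose (k s) : ℝ) * p ^ (k s))
        (fun T : Finset V => T.card) (s := 𝒞)
      rw [hcomp]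
      refine le_trans (Finset.sum_le_sum ?_) (Summable.sum_le_tsum _ (fun s _ => hterm_nonneg s) hsummable)
      intro s hs
      -- s is a cluster size occurring in 𝒞
      obtain ⟨T0, hT0, hT0card⟩ := Finset.mem_image.1 hs
      have hds : d ≤ s := by
        rw [hC, Finset.mem_filter] at hT0
        omega
      have hs1 : 1 ≤ s := le_trans hd hds
      rw [nsmul_eq_mul]
      -- count bound
      have hcount : ((𝒞.filter (fun T => T.card = s)).card : ℝ) ≤ ((z:ℝ) * e1) ^ (s-1) := by
        have hsub2 : 𝒞.filter (fun T => T.card = s) ⊆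
            Finset.univ.filter (fun T : Finset V => v ∈ T ∧
              (∀ x ∈ T, ∀ y ∈ T, ∃ w : G.Walk x y, ∀ u ∈ w.support, u ∈ T) ∧ T.card = s) := by
          intro T hT
          rw [Finset.mem_filter, hC, Finset.mem_filter] at hT
          rw [Finset.mem_filter]
          exact ⟨Finset.mem_univ _, hT.1.2.1, hT.1.2.2.1, hT.2⟩
        have h1 : (𝒞.filter (fun T => T.card = s)).card ≤ (s * z).choose (s - 1) :=
          le_trans (Finset.card_le_card hsub2) (cluster_count hz hdeg s hs1)
        calc ((𝒞.filter (fun T => T.card = s)).card : ℝ)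
            ≤ (((s * z).choose (s - 1) : ℕ) : ℝ) := by exact_mod_cast h1
        _ ≤ ((z:ℝ) * e1) ^ (s-1) := choose_le_ze_pow z s hs1
      -- per-size bound
      have hchoose : ((s.choose (k s)) : ℝ) ≤ 2 ^ s := by
        calc ((s.choose (k s)) : ℝ) ≤ ((2^s : ℕ) : ℝ) := by
              exact_mod_cast choose_le_two_pow' s (k s)
        _ = 2 ^ s := by push_cast; ring
      have hppow : p ^ (k s) ≤ sp ^ s := by
        have h2k : s ≤ 2 * k s := by show s ≤ 2 * ((s+1)/2); omega
        have : p ^ (k s) = sp ^ (2 * k s) := by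
          rw [pow_mul, hsp, Real.sq_sqrt (le_of_lt hp0)]
        rw [this]
        exact pow_le_pow_of_le_one (le_of_lt hsp0) (le_of_lt hsp1) h2k
      have hfs : ((s.choose (k s)) : ℝ) * p ^ (k s) ≤ 2 ^ s * sp ^ s := by
        apply mul_le_mul hchoose hppow (by positivity) (by positivity)
      calc ((𝒞.filter (fun T => T.card = s)).card : ℝ) * (((s.choose (k s)) : ℝ) * p ^ (k s))
          ≤ ((z:ℝ) * e1) ^ (s-1) * (2 ^ s * sp ^ s) := by
            apply mul_le_mul hcount hfs (by positivity) (by positivity)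
      _ = term s := by rw [hterm]; dsimp only; rw [if_pos hds]; ring
end

section
/- Suppose the minimum-weight decoder fails (produces a logical error) on a code with adjacency graph G and distance d. Then there exists a connected cluster S in G of size s ≥ d such that the actual error acts nontrivially on at least ⌈s/2⌉ qubits of S. -/
/-- Pauli operators on `n` qubits modulo phase, in the symplectic picture. -/
abbrev PauliVec (n : ℕ) := Fin n → ZMod 2 × ZMod 2

/-- The symplectic form; two Paulis commute iff it vanishes. -/
def sympl {n : ℕ} (a b : PauliVec n) : ZMod 2 :=
  ∑ i, ((a i).1 * (b i).2 + (a i).2 * (b i).1)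

/-- Weight of a Pauli operator. -/
def pwt {n : ℕ} (a : PauliVec n) : ℕ :=
  (Finset.univ.filter fun i => a i ≠ 0).card

lemma sympl_add_right {n : ℕ} (a b c : PauliVec n) :
    sympl a (b + c) = sympl a b + sympl a c := by
  unfold sympl
  rw [← Finset.sum_add_distrib]
  refine Finset.sum_congr rfl fun i _ => ?_
  simp only [Pi.add_apply, Prod.fst_add, Prod.snd_add]
  ring

def restr {n : ℕ} (H : PauliVec n) (S : Finset (Fin n)) : PauliVec n :=
  fun i => if i ∈ S then H i else 0

lemma rtg_symm {α : Type*} {r : α → α → Prop} (h : Symmetric r) :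
    Symmetric (Relation.ReflTransGen r) := by
  intro x y hxy
  induction hxy with
  | refl => exact .refl
  | tail _ hbc ih => exact Relation.ReflTransGen.head (h hbc) ih

lemma key_cluster {n : ℕ} {ι : Type*} [Fintype ι] (gens : ι → PauliVec n)
    (Q : Submodule (ZMod 2) (PauliVec n)) :
    ∀ m (H : PauliVec n), pwt H ≤ m → (∀ b, sympl (gens b) H = 0) → H ∉ Q →
    ∃ S : Finset (Fin n),
      (∀ x ∈ S, ∀ y ∈ S, Relation.ReflTransGen
          (fun i j => i ∈ S ∧ j ∈ S ∧ i ≠ j ∧ ∃ b, gens b i ≠ 0 ∧ gens b j ≠ 0)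
          x y) ∧
      (∀ i ∈ S, H i ≠ 0) ∧
      (∀ b, sympl (gens b) (restr H S) = 0) ∧
      restr H S ∉ Q := by
  intro m
  induction m with
  | zero =>
    intro H hw _ hQ
    exfalso
    apply hQ
    have h0 : H = 0 := by
      funext i
      by_contra hi
      unfold pwt at hw
      have hmem : i ∈ Finset.univ.filter fun i => H i ≠ 0 :=
        Finset.mem_filter.mpr ⟨Finset.mem_univ i, hi⟩
      have := Finset.card_pos.mpr ⟨i, hmem⟩
      omega
    rw [h0]; exact Q.zero_mem
  | succ m ih =>
    intro H hw hsyn hQ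
    classical
    -- H ≠ 0, pick i₀ in support
    have hH0 : H ≠ 0 := fun h => hQ (h ▸ Q.zero_mem)
    obtain ⟨i₀, hi₀⟩ : ∃ i, H i ≠ 0 := by
      by_contra h
      push_neg at h
      exact hH0 (funext fun i => h i)
    set step : Fin n → Fin n → Prop := fun i j =>
      H i ≠ 0 ∧ H j ≠ 0 ∧ i ≠ j ∧ ∃ b, gens b i ≠ 0 ∧ gens b j ≠ 0 with hstep
    set S : Finset (Fin n) :=
      Finset.univ.filter (fun i => H i ≠ 0 ∧ Relation.ReflTransGen step i₀ i) with hS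
    have hmemS : ∀ i, i ∈ S ↔ H i ≠ 0 ∧ Relation.ReflTransGen step i₀ i := by
      intro i; simp [hS]
    have hi₀S : i₀ ∈ S := (hmemS i₀).mpr ⟨hi₀, .refl⟩
    have hSsupp : ∀ i ∈ S, H i ≠ 0 := fun i hi => ((hmemS i).mp hi).1
    -- clique closure
    have hclique : ∀ (b : ι) (j : Fin n), j ∈ S → gens b j ≠ 0 →
        ∀ i, gens b i ≠ 0 → H i ≠ 0 → i ∈ S := by
      intro b j hjS hgj i hgi hHi
      by_cases hij : i = j
      · exact hij ▸ hjS
      · obtain ⟨hHj, hpath⟩ := (hmemS j).mp hjS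
        exact (hmemS i).mpr ⟨hHi, hpath.tail ⟨hHj, hHi, fun h => hij h.symm, b, hgj, hgi⟩⟩
    -- connectivity within S
    have hconn : ∀ x ∈ S, ∀ y ∈ S, Relation.ReflTransGen
        (fun i j => i ∈ S ∧ j ∈ S ∧ i ≠ j ∧ ∃ b, gens b i ≠ 0 ∧ gens b j ≠ 0) x y := by
      have hpath' : ∀ x, Relation.ReflTransGen step i₀ x → Relation.ReflTransGen
          (fun i j => i ∈ S ∧ j ∈ S ∧ i ≠ j ∧ ∃ b, gens b i ≠ 0 ∧ gens b j ≠ 0) i₀ x := by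
        intro x hx
        induction hx with
        | refl => exact .refl
        | @tail b c hab hbc ihp =>
          exact ihp.tail ⟨(hmemS b).mpr ⟨hbc.1, hab⟩,
            (hmemS c).mpr ⟨hbc.2.1, hab.tail hbc⟩, hbc.2.2.1, hbc.2.2.2⟩
      have hsym : Symmetric (fun i j => i ∈ S ∧ j ∈ S ∧ i ≠ j ∧
          ∃ b, gens b i ≠ 0 ∧ gens b j ≠ 0) := by
        rintro i j ⟨h1, h2, h3, b, h4, h5⟩
        exact ⟨h2, h1, h3.symm, b, h5, h4⟩
      intro x hx y hy
      exact (rtg_symm hsym (hpath' x ((hmemS x).mp hx).2)).trans (hpath' y ((hmemS y).mp hy).2)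
    -- syndrome of restriction is zero
    have hres_syn : ∀ b, sympl (gens b) (restr H S) = 0 := by
      intro b
      by_cases hcase : ∃ j ∈ S, gens b j ≠ 0
      · obtain ⟨j, hjS, hgj⟩ := hcase
        have : sympl (gens b) (restr H S) = sympl (gens b) H := by
          refine Finset.sum_congr rfl fun i _ => ?_
          by_cases hg : gens b i = 0
          · rw [hg]; simp
          · by_cases hH : H i = 0
            · have : restr H S i = H i := by
                simp only [restr]; split <;> simp [hH]
              rw [this]
            · have : i ∈ S := hclique b j hjS hgj i hg hH
              simp only [restr, if_pos this]
        rw [this]; exact hsyn b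
      · push_neg at hcase
        refine Finset.sum_eq_zero fun i _ => ?_
        by_cases hi : i ∈ S
        · rw [hcase i hi]; simp
        · simp only [restr, if_neg hi]; simp
    by_cases hresQ : restr H S ∈ Q
    · -- recurse on the rest
      set H₂ : PauliVec n := fun i => if i ∈ S then 0 else H i with hH₂
      have hsplit : H = restr H S + H₂ := by
        funext i
        by_cases hi : i ∈ S <;> simp [restr, hH₂, hi]
      have hH₂Q : H₂ ∉ Q := fun h => hQ (hsplit ▸ Q.add_mem hresQ h)
      have hH₂syn : ∀ b, sympl (gens b) H₂ = 0 := by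
        intro b
        have := hsyn b
        rw [hsplit, sympl_add_right, hres_syn b, zero_add] at this
        exact this
      have hwt : pwt H₂ < pwt H := by
        apply Finset.card_lt_card
        constructor
        · intro i hi
          simp only [Finset.mem_filter, Finset.mem_univ, true_and, hH₂] at hi ⊢
          by_cases h : i ∈ S
          · simp [h] at hi
          · simpa [h] using hi
        · intro hsub
          have : i₀ ∈ Finset.univ.filter fun i => H₂ i ≠ 0 :=
            hsub (by simp [hi₀])
          simp only [Finset.mem_filter, hH₂, if_pos hi₀S] at this
          exact this.2 rfl
      obtain ⟨S', hconn', hsupp', hsyn', hQ'⟩ := ih H₂ (by omega) hH₂syn hH₂Q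
      have hSS' : ∀ i ∈ S', H₂ i = H i ∧ H i ≠ 0 := by
        intro i hi
        have h2 := hsupp' i hi
        by_cases h : i ∈ S
        · exfalso; apply h2; simp [hH₂, h]
        · have he : H₂ i = H i := by simp [hH₂, h]
          exact ⟨he, he ▸ h2⟩
      have hrestr_eq : restr H₂ S' = restr H S' := by
        funext i
        simp only [restr]
        split
        · exact (hSS' i (by assumption)).1
        · rfl
      exact ⟨S', hconn', fun i hi => (hSS' i hi).2, fun b => hrestr_eq ▸ hsyn' b,
        hrestr_eq ▸ hQ'⟩
    · exact ⟨S, hconn, hSsupp, hres_syn, hresQ⟩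

/-- If the minimum-weight decoder fails on a stabilizer code of distance `d`
(i.e. the deduced error `E` has the same syndrome as the actual error `F`,
is of minimum weight among errors with that syndrome, and `G = E·F` is a
nontrivial logical operator), then there is a connected cluster `S` in the
adjacency graph of the code of size `s ≥ d` containing at least `⌈s/2⌉`
qubits in the support of the actual error `F`. -/
theorem decoder_failure_cluster {n : ℕ} {ι : Type*} [Fintype ι]
    (gens : ι → PauliVec n) (d : ℕ)
    (Q : Submodule (ZMod 2) (PauliVec n))
    (hQ : Q = Submodule.span (ZMod 2) (Set.range gens))
    (hdist : ∀ g : PauliVec n, (∀ b, sympl (gens b) g = 0) → g ∉ Q → d ≤ pwt g)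
    (E F : PauliVec n)
    (hsynd : ∀ b, sympl (gens b) E = sympl (gens b) F)
    (hmin : ∀ E' : PauliVec n,
      (∀ b, sympl (gens b) E' = sympl (gens b) F) → pwt E ≤ pwt E')
    (hfail : E + F ∉ Q) :
    ∃ S : Finset (Fin n),
      (∀ x ∈ S, ∀ y ∈ S, Relation.ReflTransGen
          (fun i j => i ∈ S ∧ j ∈ S ∧ i ≠ j ∧ ∃ b, gens b i ≠ 0 ∧ gens b j ≠ 0)
          x y) ∧
      d ≤ S.card ∧
      (S.card + 1) / 2 ≤ (S.filter fun i => F i ≠ 0).card := by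
  classical
  have hadd2 : ∀ x : ZMod 2 × ZMod 2, x + x = 0 := by decide
  have hGsyn : ∀ b, sympl (gens b) (E + F) = 0 := by
    intro b
    rw [sympl_add_right, hsynd b]
    have : ∀ x : ZMod 2, x + x = 0 := by decide
    exact this _
  obtain ⟨S, hconn, hSsupp, hres_syn, hresQ⟩ :=
    key_cluster gens Q (pwt (E + F)) (E + F) le_rfl hGsyn hfail
  refine ⟨S, hconn, ?_, ?_⟩
  · -- d ≤ S.card
    have h1 := hdist (restr (E + F) S) hres_syn hresQ
    have h2 : pwt (restr (E + F) S) = S.card := by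
      unfold pwt
      congr 1
      ext i
      simp only [Finset.mem_filter, Finset.mem_univ, true_and, restr]
      constructor
      · intro h
        by_contra hi
        exact (Finset.mem_filter.mp h).2 (by simp [hi])
      · intro hi
        simpa [hi] using hSsupp i hi
    omega
  · -- counting
    set E' : PauliVec n := fun i => if i ∈ S then F i else E i with hE'
    have hE'eq : E' = E + restr (E + F) S := by
      funext i
      by_cases hi : i ∈ S
      · simp only [hE', restr, if_pos hi, Pi.add_apply]
        rw [← add_assoc, hadd2 (E i), zero_add]
      · simp [hE', restr, hi]
    have hE'syn : ∀ b, sympl (gens b) E' = sympl (gens b) F := by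
      intro b
      rw [hE'eq, sympl_add_right, hres_syn b, add_zero, hsynd b]
    have hminE' := hmin E' hE'syn
    -- split pwt over S and Sᶜ
    have hsplit : ∀ X : PauliVec n,
        pwt X = (S.filter fun i => X i ≠ 0).card + (Sᶜ.filter fun i => X i ≠ 0).card := by
      intro X
      unfold pwt
      rw [← Finset.card_union_of_disjoint
        (Finset.disjoint_filter_filter (disjoint_compl_right)),
        ← Finset.filter_union, Finset.union_compl]
    have hE'in : S.filter (fun i => E' i ≠ 0) = S.filter (fun i => F i ≠ 0) := by
      apply Finset.filter_congr
      intro i hi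
      simp [hE', hi]
    have hE'out : Sᶜ.filter (fun i => E' i ≠ 0) = Sᶜ.filter (fun i => E i ≠ 0) := by
      apply Finset.filter_congr
      intro i hi
      rw [Finset.mem_compl] at hi
      simp [hE', hi]
    have hcnt : (S.filter fun i => E i ≠ 0).card ≤ (S.filter fun i => F i ≠ 0).card := by
      have hA := hsplit E
      have hB := hsplit E'
      rw [hE'in, hE'out] at hB
      omega
    have hcover : S.card ≤ (S.filter fun i => E i ≠ 0).card
        + (S.filter fun i => F i ≠ 0).card := by
      calc S.card ≤ ((S.filter fun i => E i ≠ 0) ∪ (S.filter fun i => F i ≠ 0)).card := by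
            apply Finset.card_le_card
            intro i hi
            rw [Finset.mem_union, Finset.mem_filter, Finset.mem_filter]
            by_contra h
            push_neg at h
            have hE0 : E i = 0 := h.1 hi
            have hF0 : F i = 0 := h.2 hi
            exact hSsupp i hi (by simp [Pi.add_apply, hE0, hF0])
        _ ≤ _ := Finset.card_union_le _ _
    omega
end
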